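/- arXiv:1405.1476 — 9 statements merged into one kernel-verified Lean document; each statement's English description precedes it below -/
import Mathlib

section
/- Every graph of treewidth at most 2 admits an {L}-representation, i.e., an intersection representation by axis-aligned L-shapes all of the same rotation. -/
/-- An axis-aligned L-shape: union of a vertical segment `[(x,y),(x,y+h)]` and a
horizontal segment `[(x,y),(x+w,y)]` sharing the bottom-left endpoint `(x,y)`. -/
def LShape (x y w h : ℝ) : Set (ℝ × ℝ) :=
  segment ℝ (x, y) (x, y + h) ∪ segment ℝ (x, y) (x + w, y)

/-- `G` has an `{L}`-representation: every vertex gets an L-shape (all of the same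
rotation), and two distinct vertices are adjacent iff their L-shapes intersect. -/
def HasLRep {V : Type*} (G : SimpleGraph V) : Prop :=
  ∃ p : V → ℝ × ℝ × ℝ × ℝ,
    (∀ v, 0 < (p v).2.2.1 ∧ 0 < (p v).2.2.2) ∧
    ∀ u v : V, u ≠ v →
      (G.Adj u v ↔
        (LShape (p u).1 (p u).2.1 (p u).2.2.1 (p u).2.2.2 ∩
          LShape (p v).1 (p v).2.1 (p v).2.2.1 (p v).2.2.2).Nonempty)

/-- `IsKTreeBase k b G`: the vertices of `G` can be linearly ordered so that the first
`b` vertices form a clique, and every later vertex `v` has exactly `k` earlier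
neighbours, which form a `k`-clique of `G`.  With `k = 3`, `b = 4` this is the
recursive definition of a 3-tree (start from `K₄`, repeatedly add a vertex whose
neighbourhood is a triangle); with `k = 2`, `b = 2` it is the definition of a 2-tree
built from an edge. -/
def IsKTreeBase (k b : ℕ) {V : Type*} (G : SimpleGraph V) : Prop :=
  b ≤ Nat.card V ∧
  ∃ r : V ≃ Fin (Nat.card V),
    (∀ u v : V, u ≠ v → (r u : ℕ) < b → (r v : ℕ) < b → G.Adj u v) ∧
    (∀ v : V, b ≤ (r v : ℕ) → ∃ S : Finset V,
      S.card = k ∧ (∀ u ∈ S, (r u : ℕ) < (r v : ℕ)) ∧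
      (∀ a ∈ S, ∀ c ∈ S, a ≠ c → G.Adj a c) ∧
      (∀ u : V, (r u : ℕ) < (r v : ℕ) → (G.Adj u v ↔ u ∈ S)))

/-- A 3-tree: obtained from `K₄` by repeatedly adding a vertex adjacent to the three
vertices of an existing triangle. -/
def IsThreeTree {V : Type*} (G : SimpleGraph V) : Prop :=
  IsKTreeBase 3 4 G

namespace LRepAux

abbrev Q : Type := ℝ × ℝ × ℝ × ℝ

def XX (q : Q) : ℝ := q.1
def YY (q : Q) : ℝ := q.2.1
def WW (q : Q) : ℝ := q.2.2.1
def HHt (q : Q) : ℝ := q.2.2.2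
def EX (q : Q) : ℝ := q.1 + q.2.2.1
def TY (q : Q) : ℝ := q.2.1 + q.2.2.2

def shp (q : Q) : Set (ℝ × ℝ) := LShape q.1 q.2.1 q.2.2.1 q.2.2.2

lemma mem_segV {x y h : ℝ} (hh : 0 < h) (p : ℝ × ℝ) :
    p ∈ segment ℝ (x, y) (x, y + h) ↔ p.1 = x ∧ y ≤ p.2 ∧ p.2 ≤ y + h := by
  constructor
  · rintro ⟨a, b, ha, hb, hab, heq⟩
    rw [Prod.ext_iff] at heq
    simp only [Prod.smul_mk, Prod.mk_add_mk, smul_eq_mul, Prod.fst_add, Prod.snd_add] at heq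
    obtain ⟨h1, h2⟩ := heq
    have key : p.2 = y + b * h := by linear_combination -h2 + y * hab
    have hb1 : b ≤ 1 := by linarith
    have k1 : b * h ≤ 1 * h := mul_le_mul_of_nonneg_right hb1 hh.le
    have k2 : 0 ≤ b * h := mul_nonneg hb hh.le
    refine ⟨by rw [← h1]; linear_combination x * hab, by linarith, by linarith⟩
  · rintro ⟨h1, h2, h3⟩
    refine ⟨(y + h - p.2)/h, (p.2 - y)/h, by apply div_nonneg <;> linarith,
      by apply div_nonneg <;> linarith, by field_simp; ring, ?_⟩
    rw [Prod.ext_iff]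
    simp only [Prod.smul_mk, Prod.mk_add_mk, smul_eq_mul, Prod.fst_add, Prod.snd_add]
    constructor
    · rw [h1]; field_simp; ring
    · field_simp; ring

lemma mem_segH {x y w : ℝ} (hw : 0 < w) (p : ℝ × ℝ) :
    p ∈ segment ℝ (x, y) (x + w, y) ↔ p.2 = y ∧ x ≤ p.1 ∧ p.1 ≤ x + w := by
  constructor
  · rintro ⟨a, b, ha, hb, hab, heq⟩
    rw [Prod.ext_iff] at heq
    simp only [Prod.smul_mk, Prod.mk_add_mk, smul_eq_mul, Prod.fst_add, Prod.snd_add] at heq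
    obtain ⟨h1, h2⟩ := heq
    have key : p.1 = x + b * w := by linear_combination -h1 + x * hab
    have hb1 : b ≤ 1 := by linarith
    have k1 : b * w ≤ 1 * w := mul_le_mul_of_nonneg_right hb1 hw.le
    have k2 : 0 ≤ b * w := mul_nonneg hb hw.le
    refine ⟨by rw [← h2]; linear_combination y * hab, by linarith, by linarith⟩
  · rintro ⟨h1, h2, h3⟩
    refine ⟨(x + w - p.1)/w, (p.1 - x)/w, by apply div_nonneg <;> linarith,
      by apply div_nonneg <;> linarith, by field_simp; ring, ?_⟩
    rw [Prod.ext_iff]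
    simp only [Prod.smul_mk, Prod.mk_add_mk, smul_eq_mul, Prod.fst_add, Prod.snd_add]
    constructor
    · field_simp; ring
    · rw [h1]; field_simp; ring

lemma shp_eq (q : Q) (hw : 0 < WW q) (hh : 0 < HHt q) :
    shp q = {p : ℝ × ℝ | p.1 = XX q ∧ YY q ≤ p.2 ∧ p.2 ≤ TY q} ∪
      {p : ℝ × ℝ | p.2 = YY q ∧ XX q ≤ p.1 ∧ p.1 ≤ EX q} := by
  ext p
  simp only [shp, LShape, Set.mem_union, Set.mem_setOf_eq]
  exact or_congr (mem_segV hh p) (mem_segH hw p)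

def Meets (a b : Q) : Prop :=
  (XX a = XX b ∧ YY b ≤ TY a ∧ YY a ≤ TY b) ∨
  (YY a = YY b ∧ XX b ≤ EX a ∧ XX a ≤ EX b) ∨
  (XX b ≤ XX a ∧ XX a ≤ EX b ∧ YY a ≤ YY b ∧ YY b ≤ TY a) ∨
  (XX a ≤ XX b ∧ XX b ≤ EX a ∧ YY b ≤ YY a ∧ YY a ≤ TY b)

lemma meets_iff (a b : Q) (hwa : 0 < WW a) (hha : 0 < HHt a)
    (hwb : 0 < WW b) (hhb : 0 < HHt b) :
    (shp a ∩ shp b).Nonempty ↔ Meets a b := by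
  have hya : YY a ≤ TY a := by simp only [YY, TY, HHt] at *; linarith
  have hyb : YY b ≤ TY b := by simp only [YY, TY, HHt] at *; linarith
  have hxa : XX a ≤ EX a := by simp only [XX, EX, WW] at *; linarith
  have hxb : XX b ≤ EX b := by simp only [XX, EX, WW] at *; linarith
  rw [shp_eq a hwa hha, shp_eq b hwb hhb]
  constructor
  · rintro ⟨p, ⟨e1, e2, e3⟩ | ⟨e1, e2, e3⟩, ⟨f1, f2, f3⟩ | ⟨f1, f2, f3⟩⟩
    · exact Or.inl ⟨by rw [← e1, ← f1], by linarith, by linarith⟩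
    · exact Or.inr (Or.inr (Or.inl ⟨by linarith [e1 ▸ f2], by linarith [e1 ▸ f3],
        by linarith [f1 ▸ e2], by linarith [f1 ▸ e3]⟩))
    · exact Or.inr (Or.inr (Or.inr ⟨by linarith [f1 ▸ e2], by linarith [f1 ▸ e3],
        by linarith [e1 ▸ f2], by linarith [e1 ▸ f3]⟩))
    · exact Or.inr (Or.inl ⟨by rw [← e1, ← f1], by linarith, by linarith⟩)
  · rintro (⟨e1, e2, e3⟩ | ⟨e1, e2, e3⟩ | ⟨e1, e2, e3, e4⟩ | ⟨e1, e2, e3, e4⟩)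
    · exact ⟨(XX a, max (YY a) (YY b)),
        Or.inl ⟨rfl, le_max_left _ _, max_le hya e2⟩,
        Or.inl ⟨e1, le_max_right _ _, max_le e3 hyb⟩⟩
    · exact ⟨(max (XX a) (XX b), YY a),
        Or.inr ⟨rfl, le_max_left _ _, max_le hxa e2⟩,
        Or.inr ⟨e1, le_max_right _ _, max_le e3 hxb⟩⟩
    · exact ⟨(XX a, YY b), Or.inl ⟨rfl, e3, e4⟩, Or.inr ⟨rfl, e1, e2⟩⟩
    · exact ⟨(XX b, YY a), Or.inr ⟨rfl, e1, e2⟩, Or.inl ⟨rfl, e3, e4⟩⟩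

def rect (k : Q) : Set (ℝ × ℝ) := Set.Icc k.1 k.2.1 ×ˢ Set.Icc k.2.2.1 k.2.2.2

lemma mem_rect {k : Q} {p : ℝ × ℝ} :
    p ∈ rect k ↔ (k.1 ≤ p.1 ∧ p.1 ≤ k.2.1) ∧ (k.2.2.1 ≤ p.2 ∧ p.2 ≤ k.2.2.2) := by
  simp only [rect, Set.mem_prod, Set.mem_Icc, Prod.mk_le_mk, Prod.le_def]

lemma shp_subset_rect {q k : Q} (hw : 0 < WW q) (hh : 0 < HHt q)
    (h1 : k.1 ≤ XX q) (h2 : EX q ≤ k.2.1) (h3 : k.2.2.1 ≤ YY q) (h4 : TY q ≤ k.2.2.2) :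
    shp q ⊆ rect k := by
  rw [shp_eq q hw hh]
  rintro p (⟨e1, e2, e3⟩ | ⟨e1, e2, e3⟩) <;> rw [mem_rect] <;>
    refine ⟨⟨?_, ?_⟩, ?_, ?_⟩ <;>
    simp only [XX, YY, EX, TY, WW, HHt] at * <;> linarith

lemma shp_disj_rect {q k : Q} (hw : 0 < WW q) (hh : 0 < HHt q)
    (hHor : YY q < k.2.2.1 ∨ k.2.2.2 < YY q ∨ EX q < k.1 ∨ k.2.1 < XX q)
    (hVer : XX q < k.1 ∨ k.2.1 < XX q ∨ TY q < k.2.2.1 ∨ k.2.2.2 < YY q) :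
    Disjoint (shp q) (rect k) := by
  rw [Set.disjoint_left, shp_eq q hw hh]
  rintro p (⟨e1, e2, e3⟩ | ⟨e1, e2, e3⟩) hp <;> rw [mem_rect] at hp <;>
    obtain ⟨⟨f1, f2⟩, f3, f4⟩ := hp
  · rcases hVer with h | h | h | h <;> linarith
  · rcases hHor with h | h | h | h <;> linarith

lemma rect_disj {k k' : Q}
    (h : k.2.1 < k'.1 ∨ k'.2.1 < k.1 ∨ k.2.2.2 < k'.2.2.1 ∨ k'.2.2.2 < k.2.2.1) :
    Disjoint (rect k) (rect k') := by
  rw [Set.disjoint_left]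
  intro p hp hp'
  rw [mem_rect] at hp hp'
  obtain ⟨⟨a1, a2⟩, a3, a4⟩ := hp
  obtain ⟨⟨b1, b2⟩, b3, b4⟩ := hp'
  rcases h with h | h | h | h <;> linarith

lemma rect_subset {k k' : Q} (h1 : k'.1 ≤ k.1) (h2 : k.2.1 ≤ k'.2.1)
    (h3 : k'.2.2.1 ≤ k.2.2.1) (h4 : k.2.2.2 ≤ k'.2.2.2) : rect k ⊆ rect k' := by
  intro p hp
  rw [mem_rect] at *
  obtain ⟨⟨a1, a2⟩, a3, a4⟩ := hp
  exact ⟨⟨by linarith, by linarith⟩, by linarith, by linarith⟩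

def HV (a b k : Q) : Prop :=
  XX a < k.1 ∧ k.1 < EX a ∧ k.2.2.1 < YY a ∧ YY a < k.2.2.2 ∧
  k.1 < XX b ∧ XX b < k.2.1 ∧ YY b < k.2.2.1 ∧ k.2.2.1 < TY b


lemma base0 (s : Prop) :
    ∃ qa qb k : Q, (0 < WW qa ∧ 0 < HHt qa) ∧ (0 < WW qb ∧ 0 < HHt qb) ∧
      ((shp qa ∩ shp qb).Nonempty ↔ s) ∧ HV qa qb k := by
  classical
  refine ⟨(0, 5, 20, 1), (10, 0, 1, if s then 10 else 3), (5, 15, 1, 8),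
    ⟨by norm_num [WW], by norm_num [HHt]⟩,
    ⟨by norm_num [WW], by norm_num [HHt]; split_ifs <;> norm_num⟩, ?_, ?_⟩
  · rw [meets_iff _ _ (by norm_num [WW]) (by norm_num [HHt])
      (by norm_num [WW]) (by norm_num [HHt]; split_ifs <;> norm_num)]
    simp only [Meets, XX, YY, WW, HHt, EX, TY]
    constructor
    · rintro (⟨f, -⟩ | ⟨f, -⟩ | ⟨f, -, -, -⟩ | ⟨-, -, -, f⟩)
      · norm_num at f
      · norm_num at f
      · norm_num at f
      · by_cases hs : s
        · exact hs
        · rw [if_neg hs] at f; norm_num at f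
    · intro hs
      refine Or.inr (Or.inr (Or.inr ⟨by norm_num, by norm_num, by norm_num, ?_⟩))
      rw [if_pos hs]; norm_num
  · simp only [HV, XX, YY, EX, TY]
    norm_num
    split_ifs <;> norm_num

lemma step (a b k : Q) (hwa : 0 < WW a) (hha : 0 < HHt a) (hwb : 0 < WW b) (hhb : 0 < HHt b)
    (hs : HV a b k) (sA sB : Prop) :
    ∃ q kav kbv kab : Q,
      (0 < WW q ∧ 0 < HHt q) ∧
      shp q ⊆ rect k ∧
      ((shp q ∩ shp a).Nonempty ↔ sA) ∧
      ((shp q ∩ shp b).Nonempty ↔ sB) ∧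
      HV a q kav ∧ HV q b kbv ∧ HV a b kab ∧
      rect kav ⊆ rect k ∧ rect kbv ⊆ rect k ∧ rect kab ⊆ rect k ∧
      Disjoint (rect kav) (rect kbv) ∧ Disjoint (rect kav) (rect kab) ∧
      Disjoint (rect kbv) (rect kab) ∧
      Disjoint (shp b) (rect kav) ∧ Disjoint (shp a) (rect kbv) ∧
      Disjoint (shp q) (rect kab) := by
  classical
  obtain ⟨xa, ya, wa, ha⟩ := a
  obtain ⟨xb, yb, wb, hb⟩ := b
  obtain ⟨x0, x1, y0, y1⟩ := k
  obtain ⟨h1, h2, h3, h4, h5, h6, h7, h8⟩ := hs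
  simp only [XX, YY, WW, HHt, EX, TY] at hwa hha hwb hhb h1 h2 h3 h4 h5 h6 h7 h8
  have hx0XM : x0 < min x1 (min xb (xa + wa)) := lt_min (lt_trans h5 h6) (lt_min h5 h2)
  have hy0YM : y0 < min y1 (min ya (yb + hb)) := lt_min (lt_trans h3 h4) (lt_min h3 h8)
  set XM : ℝ := min x1 (min xb (xa + wa)) with hXMdef
  set YM : ℝ := min y1 (min ya (yb + hb)) with hYMdef
  have hXM1 : XM ≤ x1 := min_le_left _ _
  have hXM2 : XM ≤ xb := le_trans (min_le_right _ _) (min_le_left _ _)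
  have hXM3 : XM ≤ xa + wa := le_trans (min_le_right _ _) (min_le_right _ _)
  have hYM1 : YM ≤ y1 := min_le_left _ _
  have hYM2 : YM ≤ ya := le_trans (min_le_right _ _) (min_le_left _ _)
  have hYM3 : YM ≤ yb + hb := le_trans (min_le_right _ _) (min_le_right _ _)
  set d : ℝ := (XM - x0)/10 with hddef
  set e : ℝ := (YM - y0)/10 with hedef
  have hd : 0 < d := by rw [hddef]; linarith
  have he : 0 < e := by rw [hedef]; linarith
  have hXM : x0 + 10*d = XM := by rw [hddef]; ring
  have hYM : y0 + 10*e = YM := by rw [hedef]; ring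
  set EVB : ℝ := if sB then (xb + x1)/2 else x0 + 4*d with hEVB
  set TVA : ℝ := if sA then (ya + y1)/2 else y0 + 6*e with hTVA
  have hEVB1 : x0 + 2*d < EVB := by rw [hEVB]; split_ifs <;> linarith
  have hEVB3 : x0 + 3*d < EVB := by rw [hEVB]; split_ifs <;> linarith
  have hEVB2 : EVB < x1 := by rw [hEVB]; split_ifs <;> linarith
  have hEVBs : xb ≤ EVB ↔ sB := by
    rw [hEVB]; split_ifs with hss
    · simp only [hss, iff_true]; linarith
    · constructor
      · intro hc; exfalso; linarith
      · intro hc; exact absurd hc hss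
  have hTVA1 : y0 + 2*e < TVA := by rw [hTVA]; split_ifs <;> linarith
  have hTVA3 : y0 + 4*e < TVA := by rw [hTVA]; split_ifs <;> linarith
  have hTVA2 : TVA < y1 := by rw [hTVA]; split_ifs <;> linarith
  have hTVAs : ya ≤ TVA ↔ sA := by
    rw [hTVA]; split_ifs with hss
    · simp only [hss, iff_true]; linarith
    · constructor
      · intro hc; exfalso; linarith
      · intro hc; exact absurd hc hss
  have hwq : 0 < WW (x0 + 2*d, y0 + 2*e, EVB - (x0 + 2*d), TVA - (y0 + 2*e)) := by
    simp only [WW]; linarith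
  have hhq : 0 < HHt (x0 + 2*d, y0 + 2*e, EVB - (x0 + 2*d), TVA - (y0 + 2*e)) := by
    simp only [HHt]; linarith
  refine ⟨(x0 + 2*d, y0 + 2*e, EVB - (x0 + 2*d), TVA - (y0 + 2*e)),
    (x0 + d, x0 + 5*d, y0 + 4*e, (ya + y1)/2),
    (x0 + 3*d, (xb + x1)/2, y0 + e, y0 + 3*e),
    (x0 + 6*d, (xb + x1)/2, y0 + 5*e, (ya + y1)/2),
    ⟨hwq, hhq⟩, ?_, ?_, ?_, ?_, ?_, ?_, ?_, ?_, ?_, ?_, ?_, ?_, ?_, ?_, ?_⟩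
  · -- shp q ⊆ rect k
    apply shp_subset_rect hwq hhq <;> simp only [XX, YY, EX, TY, WW, HHt] <;> linarith
  · -- q meets a iff sA
    rw [meets_iff _ (xa, ya, wa, ha) hwq hhq (by simp only [WW]; exact hwa) (by simp only [HHt]; exact hha)]
    simp only [Meets, XX, YY, WW, HHt, EX, TY]
    constructor
    · rintro (⟨f, -⟩ | ⟨f, -⟩ | ⟨-, -, -, f⟩ | ⟨f, -⟩)
      · exfalso; linarith
      · exfalso; linarith
      · exact hTVAs.mp (by linarith)
      · exfalso; linarith
    · intro hsA
      have := hTVAs.mpr hsA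
      exact Or.inr (Or.inr (Or.inl ⟨by linarith, by linarith, by linarith, by linarith⟩))
  · -- q meets b iff sB
    rw [meets_iff _ (xb, yb, wb, hb) hwq hhq (by simp only [WW]; exact hwb) (by simp only [HHt]; exact hhb)]
    simp only [Meets, XX, YY, WW, HHt, EX, TY]
    constructor
    · rintro (⟨f, -⟩ | ⟨f, -⟩ | ⟨-, -, f, -⟩ | ⟨-, f, -⟩)
      · exfalso; linarith
      · exfalso; linarith
      · exfalso; linarith
      · exact hEVBs.mp (by linarith)
    · intro hsB
      have := hEVBs.mpr hsB
      exact Or.inr (Or.inr (Or.inr ⟨by linarith, by linarith, by linarith, by linarith⟩))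
  · -- HV a q kav
    simp only [HV, XX, YY, EX, TY, WW, HHt]
    refine ⟨by linarith, by linarith, by linarith, by linarith,
      by linarith, by linarith, by linarith, by linarith⟩
  · -- HV q b kbv
    simp only [HV, XX, YY, EX, TY, WW, HHt]
    refine ⟨by linarith, by linarith, by linarith, by linarith,
      by linarith, by linarith, by linarith, by linarith⟩
  · -- HV a b kab
    simp only [HV, XX, YY, EX, TY, WW, HHt]
    refine ⟨by linarith, by linarith, by linarith, by linarith,
      by linarith, by linarith, by linarith, by linarith⟩
  · exact rect_subset (by simp; linarith) (by simp; linarith) (by simp; linarith) (by simp; linarith)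
  · exact rect_subset (by simp; linarith) (by simp; linarith) (by simp; linarith) (by simp; linarith)
  · exact rect_subset (by simp; linarith) (by simp; linarith) (by simp; linarith) (by simp; linarith)
  · exact rect_disj (Or.inr (Or.inr (Or.inr (by simp; linarith))))
  · exact rect_disj (Or.inl (by simp; linarith))
  · exact rect_disj (Or.inr (Or.inr (Or.inl (by simp; linarith))))
  · exact shp_disj_rect (by simp only [WW]; exact hwb) (by simp only [HHt]; exact hhb) (Or.inl (by simp [YY]; linarith))
      (Or.inr (Or.inl (by simp [XX]; linarith)))
  · exact shp_disj_rect (by simp only [WW]; exact hwa) (by simp only [HHt]; exact hha) (Or.inr (Or.inl (by simp [YY]; linarith)))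
      (Or.inl (by simp [XX]; linarith))
  · exact shp_disj_rect hwq hhq (Or.inl (by simp [YY]; linarith))
      (Or.inl (by simp [XX]; linarith))


lemma build {n : ℕ} (A Hrel : Fin n → Fin n → Prop) (ℓ : Fin n → ℕ)
    (hinj : Function.Injective ℓ)
    (hsurj : ∀ m, m < n → ∃ i, ℓ i = m)
    (hlt : ∀ i, ℓ i < n)
    (hAH : ∀ i j, A i j → Hrel i j)
    (hAs : ∀ i j, A i j → A j i)
    (hHs : ∀ i j, Hrel i j → Hrel j i)
    (hstep : ∀ v, 2 ≤ ℓ v → ∃ x y, x ≠ y ∧ ℓ x < ℓ v ∧ ℓ y < ℓ v ∧ Hrel x y ∧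
        ∀ u, ℓ u < ℓ v → (Hrel u v ↔ (u = x ∨ u = y)))
    (hn : 2 ≤ n) :
    ∃ p : Fin n → Q, (∀ i, 0 < WW (p i) ∧ 0 < HHt (p i)) ∧
      ∀ i j, i ≠ j → (A i j ↔ (shp (p i) ∩ shp (p j)).Nonempty) := by
  classical
  have key : ∀ m : ℕ, 2 ≤ m → m ≤ n →
      ∃ (p : Fin n → Q) (R : Fin n → Fin n → Q),
        (∀ i, 0 < WW (p i) ∧ 0 < HHt (p i)) ∧
        (∀ i j, i ≠ j → ℓ i < m → ℓ j < m →
          (A i j ↔ (shp (p i) ∩ shp (p j)).Nonempty)) ∧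
        (∀ x y, ℓ x < ℓ y → ℓ y < m → Hrel x y →
          (HV (p x) (p y) (R x y) ∨ HV (p y) (p x) (R x y)) ∧
          (∀ c, ℓ c < m → c ≠ x → c ≠ y → Disjoint (shp (p c)) (rect (R x y)))) ∧
        (∀ x y x' y', ℓ x < ℓ y → ℓ y < m → Hrel x y → ℓ x' < ℓ y' → ℓ y' < m →
          Hrel x' y' → ¬(x = x' ∧ y = y') →
          Disjoint (rect (R x y)) (rect (R x' y'))) := by
    intro m hm2
    induction m, hm2 using Nat.le_induction with
    | base =>
      intro hn2
      obtain ⟨i0, hi0⟩ := hsurj 0 (by omega)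
      obtain ⟨i1, hi1⟩ := hsurj 1 (by omega)
      have hne : i0 ≠ i1 := by intro h; rw [h, hi1] at hi0; omega
      obtain ⟨qa, qb, k, hqa, hqb, hiff, hHV⟩ := base0 (A i0 i1)
      have hidx : ∀ z, ℓ z < 2 → z = i0 ∨ z = i1 := by
        intro z hz
        have : ℓ z = 0 ∨ ℓ z = 1 := by omega
        rcases this with h | h
        · exact Or.inl (hinj (h.trans hi0.symm))
        · exact Or.inr (hinj (h.trans hi1.symm))
      set pp : Fin n → Q := fun i => if i = i0 then qa else if i = i1 then qb else qa
        with hpp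
      have hp0 : pp i0 = qa := by rw [hpp]; simp
      have hp1 : pp i1 = qb := by rw [hpp]; simp [Ne.symm hne]
      refine ⟨pp, fun _ _ => k, ?_, ?_, ?_, ?_⟩
      · intro i
        rw [hpp]
        dsimp only
        split_ifs
        · exact hqa
        · exact hqb
        · exact hqa
      · intro i j hij hi hj
        rcases hidx i hi with rfl | rfl <;> rcases hidx j hj with rfl | rfl
        · exact absurd rfl hij
        · rw [hp0, hp1]; exact hiff.symm
        · rw [hp0, hp1, Set.inter_comm]
          exact ⟨fun h => hiff.mpr (hAs _ _ h), fun h => hAs _ _ (hiff.mp h)⟩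
        · exact absurd rfl hij
      · intro x y hxy hy2 hH
        have hx0 : ℓ x = 0 := by omega
        have hy1 : ℓ y = 1 := by omega
        have hx : x = i0 := hinj (hx0.trans hi0.symm)
        have hy : y = i1 := hinj (hy1.trans hi1.symm)
        subst hx; subst hy
        refine ⟨?_, ?_⟩
        · rw [hp0, hp1]; exact Or.inl hHV
        · intro c hc hc0 hc1
          rcases hidx c hc with rfl | rfl
          · exact absurd rfl hc0
          · exact absurd rfl hc1
      · intro x y x' y' h1 h2 h3 h1' h2' h3' hne'
        exfalso
        apply hne'
        have hx0 : ℓ x = 0 := by omega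
        have hy1 : ℓ y = 1 := by omega
        have hx0' : ℓ x' = 0 := by omega
        have hy1' : ℓ y' = 1 := by omega
        exact ⟨(hinj (hx0.trans hi0.symm)).trans (hinj (hx0'.trans hi0.symm)).symm,
          (hinj (hy1.trans hi1.symm)).trans (hinj (hy1'.trans hi1.symm)).symm⟩
    | succ m hm2 IH =>
      intro hm1n
      obtain ⟨p, R, hpos, hadj, hspot, hdisj⟩ := IH (by omega)
      obtain ⟨v, hv⟩ := hsurj m (by omega)
      have hv2 : 2 ≤ ℓ v := by omega
      obtain ⟨x', y', hxy', hx'v, hy'v, hH', hch'⟩ := hstep v hv2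
      obtain ⟨a, b, hab, hlab, hlbv, hHab, hch⟩ :
          ∃ a b, a ≠ b ∧ ℓ a < ℓ b ∧ ℓ b < ℓ v ∧ Hrel a b ∧
            ∀ u, ℓ u < ℓ v → (Hrel u v ↔ (u = a ∨ u = b)) := by
        have hlne : ℓ x' ≠ ℓ y' := fun h => hxy' (hinj h)
        rcases Nat.lt_or_ge (ℓ x') (ℓ y') with h | h
        · exact ⟨x', y', hxy', h, hy'v, hH', hch'⟩
        · exact ⟨y', x', hxy'.symm, by omega, hx'v, hHs _ _ hH',
            fun u hu => (hch' u hu).trans or_comm⟩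
      have hlbm : ℓ b < m := by omega
      have hlam : ℓ a < m := by omega
      have hav : a ≠ v := fun h => by rw [h] at hlam; omega
      have hbv : b ≠ v := fun h => by rw [h] at hlbm; omega
      obtain ⟨hSP, hCont⟩ := hspot a b hlab hlbm hHab
      obtain ⟨q, kav, kbv, kab, hposq, hsub, hqa, hqb, hkav, hkbv, hkab,
          hsubav, hsubbv, hsubab, hd1, hd2, hd3, hdbav, hdabv, hdqab⟩ :
          ∃ q kav kbv kab : Q,
            (0 < WW q ∧ 0 < HHt q) ∧
            shp q ⊆ rect (R a b) ∧
            ((shp q ∩ shp (p a)).Nonempty ↔ A a v) ∧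
            ((shp q ∩ shp (p b)).Nonempty ↔ A b v) ∧
            (HV (p a) q kav ∨ HV q (p a) kav) ∧
            (HV (p b) q kbv ∨ HV q (p b) kbv) ∧
            (HV (p a) (p b) kab ∨ HV (p b) (p a) kab) ∧
            rect kav ⊆ rect (R a b) ∧ rect kbv ⊆ rect (R a b) ∧
            rect kab ⊆ rect (R a b) ∧
            Disjoint (rect kav) (rect kbv) ∧ Disjoint (rect kav) (rect kab) ∧
            Disjoint (rect kbv) (rect kab) ∧
            Disjoint (shp (p b)) (rect kav) ∧ Disjoint (shp (p a)) (rect kbv) ∧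
            Disjoint (shp q) (rect kab) := by
        rcases hSP with h | h
        · obtain ⟨q, k1, k2, k3, c1, c2, c3, c4, c5, c6, c7, c8, c9, c10,
            c11, c12, c13, c14, c15, c16⟩ :=
            step (p a) (p b) (R a b) (hpos a).1 (hpos a).2 (hpos b).1 (hpos b).2 h
              (A a v) (A b v)
          exact ⟨q, k1, k2, k3, c1, c2, c3, c4, Or.inl c5, Or.inr c6, Or.inl c7,
            c8, c9, c10, c11, c12, c13, c14, c15, c16⟩
        · obtain ⟨q, k1, k2, k3, c1, c2, c3, c4, c5, c6, c7, c8, c9, c10,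
            c11, c12, c13, c14, c15, c16⟩ :=
            step (p b) (p a) (R a b) (hpos b).1 (hpos b).2 (hpos a).1 (hpos a).2 h
              (A b v) (A a v)
          exact ⟨q, k2, k1, k3, c1, c2, c4, c3, Or.inr c6, Or.inl c5, Or.inr c7,
            c9, c8, c10, c11.symm, c13, c12, c15, c14, c16⟩
      set p' : Fin n → Q := Function.update p v q with hp'
      set R' : Fin n → Fin n → Q := fun s t =>
        if t = v then (if s = a then kav else kbv)
        else if s = a ∧ t = b then kab else R s t with hR'
      have hup : ∀ c : Fin n, c ≠ v → p' c = p c := by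
        intro c hc; rw [hp']; exact Function.update_of_ne hc _ _
      have hupv : p' v = q := by rw [hp']; simp
      have hmem : ∀ i : Fin n, ℓ i < m + 1 → ℓ i < m ∨ i = v := by
        intro i h
        by_cases h' : ℓ i < m
        · exact Or.inl h'
        · have h'' : ℓ i = m := by omega
          exact Or.inr (hinj (h''.trans hv.symm))
      have keyrect : ∀ s t, ℓ s < ℓ t → ℓ t < m + 1 → Hrel s t →
          (R' s t = kav ∧ s = a ∧ t = v) ∨ (R' s t = kbv ∧ s = b ∧ t = v) ∨
          (R' s t = kab ∧ s = a ∧ t = b) ∨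
          (R' s t = R s t ∧ ℓ t < m ∧ ¬(s = a ∧ t = b)) := by
        intro s t h1 h2 h3
        by_cases htv : t = v
        · subst htv
          rcases (hch s h1).mp h3 with rfl | rfl
          · exact Or.inl ⟨by rw [hR']; simp, rfl, rfl⟩
          · exact Or.inr (Or.inl ⟨by rw [hR']; simp [Ne.symm hab], rfl, rfl⟩)
        · have htm : ℓ t < m := by
            rcases hmem t h2 with h | h
            · exact h
            · exact absurd h htv
          by_cases hcase : s = a ∧ t = b
          · obtain ⟨rfl, rfl⟩ := hcase
            refine Or.inr (Or.inr (Or.inl ⟨?_, rfl, rfl⟩))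
            rw [hR']
            simp [htv]
          · refine Or.inr (Or.inr (Or.inr ⟨?_, htm, hcase⟩))
            rw [hR']
            simp [htv, hcase]
      have hAdjv : ∀ j, ℓ j < m → (A v j ↔ (shp q ∩ shp (p j)).Nonempty) := by
        intro j hj
        have hjv : ℓ j < ℓ v := by omega
        by_cases hja : j = a
        · subst hja; exact ⟨fun h => hqa.mpr (hAs _ _ h), fun h => hAs _ _ (hqa.mp h)⟩
        · by_cases hjb : j = b
          · subst hjb; exact ⟨fun h => hqb.mpr (hAs _ _ h), fun h => hAs _ _ (hqb.mp h)⟩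
          · constructor
            · intro hAvj
              exfalso
              have hrel : Hrel j v := hHs _ _ (hAH _ _ hAvj)
              rcases (hch j hjv).mp hrel with rfl | rfl
              · exact hja rfl
              · exact hjb rfl
            · intro hne2
              exfalso
              obtain ⟨z, hz1, hz2⟩ := hne2
              exact Set.disjoint_left.mp (hCont j hj hja hjb) hz2 (hsub hz1)
      have hnev : ∀ i : Fin n, ℓ i < m → i ≠ v := by
        intro i hi h; rw [h] at hi; omega
      refine ⟨p', R', ?_, ?_, ?_, ?_⟩
      · intro i
        by_cases hiv : i = v
        · subst hiv; rw [hupv]; exact hposq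
        · rw [hup i hiv]; exact hpos i
      · intro i j hij hi hj
        rcases hmem i hi with hi' | rfl
        · rcases hmem j hj with hj' | rfl
          · rw [hup i (hnev i hi'), hup j (hnev j hj')]
            exact hadj i j hij hi' hj'
          · rw [hup i (hnev i hi'), hupv, Set.inter_comm]
            exact ⟨fun h => (hAdjv i hi').mp (hAs _ _ h),
              fun h => hAs _ _ ((hAdjv i hi').mpr h)⟩
        · rcases hmem j hj with hj' | rfl
          · rw [hupv, hup j (hnev j hj')]
            exact hAdjv j hj'
          · exact absurd rfl hij
      · intro s t h1 h2 h3
        rcases keyrect s t h1 h2 h3 with ⟨hR, h4, h5⟩ | ⟨hR, h4, h5⟩ |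
          ⟨hR, h4, h5⟩ | ⟨hR, htm, hcase⟩
        · rw [hR, h4, h5, hup a hav, hupv]
          refine ⟨hkav, ?_⟩
          intro c hc hca hcv
          rcases hmem c hc with hc' | rfl
          · rw [hup c (hnev c hc')]
            by_cases hcb : c = b
            · subst hcb; exact hdbav
            · exact Disjoint.mono_right hsubav (hCont c hc' hca hcb)
          · exact absurd rfl hcv
        · rw [hR, h4, h5, hup b hbv, hupv]
          refine ⟨hkbv, ?_⟩
          intro c hc hcb hcv
          rcases hmem c hc with hc' | rfl
          · rw [hup c (hnev c hc')]
            by_cases hca : c = a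
            · subst hca; exact hdabv
            · exact Disjoint.mono_right hsubbv (hCont c hc' hca hcb)
          · exact absurd rfl hcv
        · rw [hR, h4, h5, hup a hav, hup b hbv]
          refine ⟨hkab, ?_⟩
          intro c hc hca hcb
          rcases hmem c hc with hc' | rfl
          · rw [hup c (hnev c hc')]
            exact Disjoint.mono_right hsubab (hCont c hc' hca hcb)
          · rw [hupv]; exact hdqab
        · rw [hR, hup s (hnev s (by omega)), hup t (hnev t htm)]
          refine ⟨(hspot s t h1 htm h3).1, ?_⟩
          intro c hc hcs hct
          rcases hmem c hc with hc' | rfl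
          · rw [hup c (hnev c hc')]
            exact (hspot s t h1 htm h3).2 c hc' hcs hct
          · rw [hupv]
            exact Disjoint.mono_left hsub
              (hdisj a b s t hlab hlbm hHab h1 htm h3
                (fun hh => hcase ⟨hh.1.symm, hh.2.symm⟩))
      · intro s t s' t' h1 h2 h3 h1' h2' h3' hnepair
        rcases keyrect s t h1 h2 h3 with ⟨hR, h4, h5⟩ | ⟨hR, h4, h5⟩ |
          ⟨hR, h4, h5⟩ | ⟨hR, htm, hcase⟩ <;>
          rcases keyrect s' t' h1' h2' h3' with ⟨hR2, h5', h6'⟩ | ⟨hR2, h5', h6'⟩ |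
            ⟨hR2, h5', h6'⟩ | ⟨hR2, htm2, hcase2⟩ <;>
          rw [hR, hR2]
        · exact absurd ⟨h4.trans h5'.symm, h5.trans h6'.symm⟩ hnepair
        · exact hd1
        · exact hd2
        · exact Disjoint.mono_left hsubav
            (hdisj a b s' t' hlab hlbm hHab h1' htm2 h3'
              (fun hh => hcase2 ⟨hh.1.symm, hh.2.symm⟩))
        · exact hd1.symm
        · exact absurd ⟨h4.trans h5'.symm, h5.trans h6'.symm⟩ hnepair
        · exact hd3
        · exact Disjoint.mono_left hsubbv
            (hdisj a b s' t' hlab hlbm hHab h1' htm2 h3'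
              (fun hh => hcase2 ⟨hh.1.symm, hh.2.symm⟩))
        · exact hd2.symm
        · exact hd3.symm
        · exact absurd ⟨h4.trans h5'.symm, h5.trans h6'.symm⟩ hnepair
        · exact Disjoint.mono_left hsubab
            (hdisj a b s' t' hlab hlbm hHab h1' htm2 h3'
              (fun hh => hcase2 ⟨hh.1.symm, hh.2.symm⟩))
        · exact (Disjoint.mono_left hsubav
            (hdisj a b s t hlab hlbm hHab h1 htm h3
              (fun hh => hcase ⟨hh.1.symm, hh.2.symm⟩))).symm
        · exact (Disjoint.mono_left hsubbv
            (hdisj a b s t hlab hlbm hHab h1 htm h3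
              (fun hh => hcase ⟨hh.1.symm, hh.2.symm⟩))).symm
        · exact (Disjoint.mono_left hsubab
            (hdisj a b s t hlab hlbm hHab h1 htm h3
              (fun hh => hcase ⟨hh.1.symm, hh.2.symm⟩))).symm
        · exact hdisj s t s' t' h1 htm h3 h1' htm2 h3' hnepair
  obtain ⟨p, R, hpos, hadj, -, -⟩ := key n hn le_rfl
  exact ⟨p, hpos, fun i j hij => hadj i j hij (hlt i) (hlt j)⟩


end LRepAux

/-- Every graph of treewidth at most 2 (i.e. every subgraph of a
2-tree, built from an edge by repeatedly adding a vertex joined to the two endpoints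
of an existing edge) admits an `{L}`-representation. -/
theorem treewidth_two_hasLRep {V : Type*} (G : SimpleGraph V)
    (htw : ∃ (n : ℕ) (H : SimpleGraph (Fin n)) (f : V ↪ Fin n),
      IsKTreeBase 2 2 H ∧ ∀ u v : V, G.Adj u v → H.Adj (f u) (f v)) :
    HasLRep G := by
  classical
  obtain ⟨n, H, f, ⟨hcard, r, hbase, hstepH⟩, hsub⟩ := htw
  have hcn : Nat.card (Fin n) = n := by simp
  have hn : 2 ≤ n := by rw [← hcn]; exact hcard
  set ℓ : Fin n → ℕ := fun i => (r i : ℕ) with hℓ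
  have hinj : Function.Injective ℓ := by
    intro i j h
    exact r.injective (Fin.ext h)
  have hlt : ∀ i, ℓ i < n := by
    intro i
    have h2 := (r i).isLt
    show (r i : ℕ) < n
    omega
  have hsurj : ∀ m, m < n → ∃ i, ℓ i = m := by
    intro m hm
    refine ⟨r.symm ⟨m, by rw [hcn]; exact hm⟩, ?_⟩
    simp [hℓ]
  set A : Fin n → Fin n → Prop := fun i j => (G.map f).Adj i j with hA
  have hAH : ∀ i j, A i j → H.Adj i j := by
    intro i j hij
    rw [hA] at hij
    simp only [SimpleGraph.map_adj] at hij
    obtain ⟨u, w, huw, rfl, rfl⟩ := hij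
    exact hsub u w huw
  have hstep' : ∀ v, 2 ≤ ℓ v → ∃ x y, x ≠ y ∧ ℓ x < ℓ v ∧ ℓ y < ℓ v ∧ H.Adj x y ∧
      ∀ u, ℓ u < ℓ v → (H.Adj u v ↔ (u = x ∨ u = y)) := by
    intro v hv
    obtain ⟨S, hS2, hSlt, hclique, hSadj⟩ := hstepH v hv
    obtain ⟨x, y, hxy, rfl⟩ := Finset.card_eq_two.mp hS2
    refine ⟨x, y, hxy, hSlt x (by simp), hSlt y (by simp),
      hclique x (by simp) y (by simp) hxy, ?_⟩
    intro u hu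
    rw [hSadj u hu]
    simp
  obtain ⟨P, hPpos, hPadj⟩ := LRepAux.build A H.Adj ℓ hinj hsurj hlt hAH
    (fun i j h => h.symm) (fun i j h => h.symm) hstep' hn
  refine ⟨fun u => P (f u), fun u => hPpos (f u), ?_⟩
  intro u w huw
  have hfu : f u ≠ f w := fun h => huw (f.injective h)
  have hGA : G.Adj u w ↔ A (f u) (f w) := by
    rw [hA]
    simp only [SimpleGraph.map_adj]
    constructor
    · intro h; exact ⟨u, w, h, rfl, rfl⟩
    · rintro ⟨u2, w2, h2, e1, e2⟩
      rwa [f.injective e1, f.injective e2] at h2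
  rw [hGA]
  exact hPadj (f u) (f w) hfu
end

section
/- For every graph G, the complement of the full subdivision of G (each edge subdivided exactly once) is a B_2-VPG-graph, i.e., has an intersection representation by axis-aligned rectilinear paths with at most 2 bends each. -/
/-- The point set of the rectilinear path through `p 0, p 1, …, p (k+1)`:
the union of the `k+1` consecutive closed segments (a path with at most `k` bends). -/
def BendPathSet (k : ℕ) (p : ℕ → ℝ × ℝ) : Set (ℝ × ℝ) :=
  ⋃ i ∈ Finset.range (k + 1), segment ℝ (p i) (p (i + 1))

/-- The polyline through `p 0, …, p (k+1)` is rectilinear: every consecutive pair of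
points lies on a common vertical or horizontal line. -/
def IsRectilinear (k : ℕ) (p : ℕ → ℝ × ℝ) : Prop :=
  ∀ i < k + 1, (p i).1 = (p (i + 1)).1 ∨ (p i).2 = (p (i + 1)).2

/-- `G` is a `B_k`-VPG-graph: vertices can be represented by axis-aligned rectilinear
paths with at most `k` bends each so that two distinct vertices are adjacent iff the
corresponding paths intersect. -/
def IsBkVPG {V : Type*} (k : ℕ) (G : SimpleGraph V) : Prop :=
  ∃ p : V → ℕ → ℝ × ℝ, (∀ v, IsRectilinear k (p v)) ∧
    ∀ u v : V, u ≠ v →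
      (G.Adj u v ↔ (BendPathSet k (p u) ∩ BendPathSet k (p v)).Nonempty)

/-- The full subdivision of `G` with every edge subdivided exactly once: one new
vertex `w_e` per edge `e = uv`, adjacent exactly to `u` and `v`. -/
def fullSubdivision {V : Type*} (G : SimpleGraph V) : SimpleGraph (V ⊕ G.edgeSet) :=
  SimpleGraph.fromRel (fun a b =>
    ∃ (u : V) (e : G.edgeSet), a = Sum.inl u ∧ b = Sum.inr e ∧ u ∈ (e : Sym2 V))

/-! ### Auxiliary geometric lemmas -/

lemma mem_seg_horiz {x1 x2 c : ℝ} {z : ℝ × ℝ} (h : x1 ≤ x2) :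
    z ∈ segment ℝ (x1, c) (x2, c) ↔ z.2 = c ∧ x1 ≤ z.1 ∧ z.1 ≤ x2 := by
  constructor
  · rintro ⟨a, b, ha, hb, hab, hz⟩
    have h1 : a * x1 + b * x2 = z.1 := by
      have := congrArg Prod.fst hz
      simpa using this
    have h2 : a * c + b * c = z.2 := by
      have := congrArg Prod.snd hz
      simpa using this
    have e1 : z.1 = x1 + b * (x2 - x1) := by linear_combination x1 * hab - h1
    have e2 : z.1 = x2 - a * (x2 - x1) := by linear_combination x2 * hab - h1
    have m1 := mul_nonneg ha (sub_nonneg.2 h)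
    have m2 := mul_nonneg hb (sub_nonneg.2 h)
    exact ⟨by linear_combination c * hab - h2, by linarith, by linarith⟩
  · rintro ⟨hc, h1, h2⟩
    have : z.1 ∈ segment ℝ x1 x2 := by
      rw [segment_eq_Icc h]; exact ⟨h1, h2⟩
    obtain ⟨a, b, ha, hb, hab, hx⟩ := this
    refine ⟨a, b, ha, hb, hab, ?_⟩
    rw [Prod.ext_iff]
    constructor
    · simpa using hx
    · simp only [Prod.snd_add, Prod.smul_snd, smul_eq_mul]
      rw [hc]; linear_combination c * hab

lemma mem_seg_vert {y1 y2 c : ℝ} {z : ℝ × ℝ} (h : y1 ≤ y2) :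
    z ∈ segment ℝ (c, y1) (c, y2) ↔ z.1 = c ∧ y1 ≤ z.2 ∧ z.2 ≤ y2 := by
  constructor
  · rintro ⟨a, b, ha, hb, hab, hz⟩
    have h1 : a * y1 + b * y2 = z.2 := by
      have := congrArg Prod.snd hz
      simpa using this
    have h2 : a * c + b * c = z.1 := by
      have := congrArg Prod.fst hz
      simpa using this
    have e1 : z.2 = y1 + b * (y2 - y1) := by linear_combination y1 * hab - h1
    have e2 : z.2 = y2 - a * (y2 - y1) := by linear_combination y2 * hab - h1
    have m1 := mul_nonneg ha (sub_nonneg.2 h)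
    have m2 := mul_nonneg hb (sub_nonneg.2 h)
    exact ⟨by linear_combination c * hab - h2, by linarith, by linarith⟩
  · rintro ⟨hc, h1, h2⟩
    have : z.2 ∈ segment ℝ y1 y2 := by
      rw [segment_eq_Icc h]; exact ⟨h1, h2⟩
    obtain ⟨a, b, ha, hb, hab, hx⟩ := this
    refine ⟨a, b, ha, hb, hab, ?_⟩
    rw [Prod.ext_iff]
    constructor
    · simp only [Prod.fst_add, Prod.smul_fst, smul_eq_mul]
      rw [hc]; linear_combination c * hab
    · simpa using hx

/-- The 2-bend path representing an original vertex with index `a`. -/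
def Ppath (N a : ℝ) : ℕ → ℝ × ℝ
  | 0 => (0, a)
  | 1 => (a, a)
  | 2 => (a, N + a)
  | _ => (N, N + a)

/-- The 2-bend path representing the subdivision vertex of an edge `{i, j}`, `i < j`. -/
noncomputable def Qpath (N i j : ℝ) : ℕ → ℝ × ℝ
  | 0 => (i + 2⁻¹, j - 2⁻¹)
  | 1 => (j + 2⁻¹, j - 2⁻¹)
  | 2 => (j + 2⁻¹, N + i - 2⁻¹)
  | _ => (N + 1, N + i - 2⁻¹)

lemma rect_P (N a : ℝ) : IsRectilinear 2 (Ppath N a) := by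
  intro i hi
  interval_cases i <;> simp [Ppath]

lemma rect_Q (N i j : ℝ) : IsRectilinear 2 (Qpath N i j) := by
  intro t ht
  interval_cases t <;> simp [Qpath]

lemma mem_bps {p : ℕ → ℝ × ℝ} {z : ℝ × ℝ} :
    z ∈ BendPathSet 2 p ↔ z ∈ segment ℝ (p 0) (p 1) ∨ z ∈ segment ℝ (p 1) (p 2) ∨
      z ∈ segment ℝ (p 2) (p 3) := by
  simp only [BendPathSet, Set.mem_iUnion, Finset.mem_range]
  constructor
  · rintro ⟨i, hi, h⟩
    interval_cases i <;> tauto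
  · rintro (h | h | h)
    exacts [⟨0, by norm_num, h⟩, ⟨1, by norm_num, h⟩, ⟨2, by norm_num, h⟩]

lemma mem_P_iff {N a : ℝ} (h0 : 0 ≤ a) (h1 : a ≤ N) {z : ℝ × ℝ} :
    z ∈ BendPathSet 2 (Ppath N a) ↔
      (z.2 = a ∧ 0 ≤ z.1 ∧ z.1 ≤ a) ∨ (z.1 = a ∧ a ≤ z.2 ∧ z.2 ≤ N + a) ∨
        (z.2 = N + a ∧ a ≤ z.1 ∧ z.1 ≤ N) := by
  rw [mem_bps]
  show z ∈ segment ℝ (0, a) (a, a) ∨ z ∈ segment ℝ (a, a) (a, N + a) ∨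
      z ∈ segment ℝ (a, N + a) (N, N + a) ↔ _
  rw [mem_seg_horiz h0, mem_seg_vert (by linarith), mem_seg_horiz h1]

lemma mem_Q_iff {N i j : ℝ} (hi : 1 ≤ i) (hij : i < j) (hjN : j ≤ N - 1) {z : ℝ × ℝ} :
    z ∈ BendPathSet 2 (Qpath N i j) ↔
      (z.2 = j - 2⁻¹ ∧ i + 2⁻¹ ≤ z.1 ∧ z.1 ≤ j + 2⁻¹) ∨
        (z.1 = j + 2⁻¹ ∧ j - 2⁻¹ ≤ z.2 ∧ z.2 ≤ N + i - 2⁻¹) ∨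
          (z.2 = N + i - 2⁻¹ ∧ j + 2⁻¹ ≤ z.1 ∧ z.1 ≤ N + 1) := by
  rw [mem_bps]
  show z ∈ segment ℝ (i + 2⁻¹, j - 2⁻¹) (j + 2⁻¹, j - 2⁻¹) ∨
      z ∈ segment ℝ (j + 2⁻¹, j - 2⁻¹) (j + 2⁻¹, N + i - 2⁻¹) ∨
        z ∈ segment ℝ (j + 2⁻¹, N + i - 2⁻¹) (N + 1, N + i - 2⁻¹) ↔ _
  rw [mem_seg_horiz (by linarith), mem_seg_vert (by linarith), mem_seg_horiz (by linarith)]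

lemma PP_inter {N a b : ℝ} (h0 : 0 ≤ a) (hab : a < b) (hbN : b ≤ N - 1) :
    (BendPathSet 2 (Ppath N a) ∩ BendPathSet 2 (Ppath N b)).Nonempty := by
  refine ⟨(a, b), ?_, ?_⟩
  · rw [mem_P_iff h0 (by linarith)]
    exact Or.inr (Or.inl ⟨rfl, by linarith, by linarith⟩)
  · rw [mem_P_iff (by linarith) (by linarith)]
    exact Or.inl ⟨rfl, by linarith, by linarith⟩

lemma QQ_inter {N i j i' j' : ℝ} (hi : 1 ≤ i) (hij : i < j) (hjN : j ≤ N - 1)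
    (hi' : 1 ≤ i') (hij' : i' < j') (hj'N : j' ≤ N - 1) (hjj : j ≤ j') :
    (BendPathSet 2 (Qpath N i j) ∩ BendPathSet 2 (Qpath N i' j')).Nonempty := by
  rcases le_total i i' with h | h
  · refine ⟨(j' + 2⁻¹, N + i - 2⁻¹), ?_, ?_⟩
    · rw [mem_Q_iff hi hij hjN]
      exact Or.inr (Or.inr ⟨rfl, by linarith, by linarith⟩)
    · rw [mem_Q_iff hi' hij' hj'N]
      exact Or.inr (Or.inl ⟨rfl, by linarith, by linarith⟩)
  · refine ⟨(j + 2⁻¹, j' - 2⁻¹), ?_, ?_⟩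
    · rw [mem_Q_iff hi hij hjN]
      exact Or.inr (Or.inl ⟨rfl, by linarith, by linarith⟩)
    · rw [mem_Q_iff hi' hij' hj'N]
      exact Or.inl ⟨rfl, by linarith, by linarith⟩

lemma PQ_lt {N a i j : ℝ} (ha : 1 ≤ a) (hai : a + 1 ≤ i) (hij : i + 1 ≤ j) (hjN : j ≤ N - 1) :
    (BendPathSet 2 (Ppath N a) ∩ BendPathSet 2 (Qpath N i j)).Nonempty := by
  refine ⟨(j + 2⁻¹, N + a), ?_, ?_⟩
  · rw [mem_P_iff (by linarith) (by linarith)]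
    exact Or.inr (Or.inr ⟨rfl, by linarith, by linarith⟩)
  · rw [mem_Q_iff (by linarith) (by linarith) hjN]
    exact Or.inr (Or.inl ⟨rfl, by linarith, by linarith⟩)

lemma PQ_mid {N a i j : ℝ} (hi : 1 ≤ i) (hia : i + 1 ≤ a) (haj : a + 1 ≤ j) (hjN : j ≤ N - 1) :
    (BendPathSet 2 (Ppath N a) ∩ BendPathSet 2 (Qpath N i j)).Nonempty := by
  refine ⟨(a, j - 2⁻¹), ?_, ?_⟩
  · rw [mem_P_iff (by linarith) (by linarith)]
    exact Or.inr (Or.inl ⟨rfl, by linarith, by linarith⟩)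
  · rw [mem_Q_iff hi (by linarith) hjN]
    exact Or.inl ⟨rfl, by linarith, by linarith⟩

lemma PQ_gt {N a i j : ℝ} (hi : 1 ≤ i) (hij : i + 1 ≤ j) (hja : j + 1 ≤ a) (haN : a ≤ N - 1) :
    (BendPathSet 2 (Ppath N a) ∩ BendPathSet 2 (Qpath N i j)).Nonempty := by
  refine ⟨(j + 2⁻¹, a), ?_, ?_⟩
  · rw [mem_P_iff (by linarith) (by linarith)]
    exact Or.inl ⟨rfl, by linarith, by linarith⟩
  · rw [mem_Q_iff hi (by linarith) (by linarith)]
    exact Or.inr (Or.inl ⟨rfl, by linarith, by linarith⟩)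

lemma PQ_disj {N a i j : ℝ} (hi : 1 ≤ i) (hij : i + 1 ≤ j) (hjN : j ≤ N - 1)
    (ha : a = i ∨ a = j) :
    ¬ (BendPathSet 2 (Ppath N a) ∩ BendPathSet 2 (Qpath N i j)).Nonempty := by
  rintro ⟨z, hzP, hzQ⟩
  have h0a : (0:ℝ) ≤ a := by rcases ha with rfl | rfl <;> linarith
  have haN : a ≤ N := by rcases ha with rfl | rfl <;> linarith
  rw [mem_P_iff h0a haN] at hzP
  rw [mem_Q_iff hi (by linarith) hjN] at hzQ
  rcases ha with rfl | rfl <;>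
    rcases hzP with ⟨h1, h2, h3⟩ | ⟨h1, h2, h3⟩ | ⟨h1, h2, h3⟩ <;>
      rcases hzQ with ⟨g1, g2, g3⟩ | ⟨g1, g2, g3⟩ | ⟨g1, g2, g3⟩ <;> linarith

/-- For every graph `G`, the complement of the full subdivision of
`G` (each edge subdivided exactly once) is a `B₂`-VPG-graph. -/
theorem complement_fullSubdivision_isB2VPG {V : Type*} [Fintype V]
    (G : SimpleGraph V) : IsBkVPG 2 (fullSubdivision G)ᶜ := by
  classical
  set n : ℕ := Fintype.card V with hn
  set N : ℝ := (n : ℝ) + 1 with hN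
  let ν : V → ℕ := fun v => (Fintype.equivFin V v : ℕ)
  have hν_inj : Function.Injective ν := fun a b h =>
    (Fintype.equivFin V).injective (Fin.val_injective h)
  have hν_lt : ∀ v, ν v < n := fun v => (Fintype.equivFin V v).isLt
  let lo : Sym2 V → ℕ := Sym2.lift ⟨fun a b => min (ν a) (ν b), fun _ _ => min_comm _ _⟩
  let hi : Sym2 V → ℕ := Sym2.lift ⟨fun a b => max (ν a) (ν b), fun _ _ => max_comm _ _⟩
  have mem_iff : ∀ (u : V) (e : Sym2 V), u ∈ e ↔ (ν u = lo e ∨ ν u = hi e) := by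
    intro u e
    induction e using Sym2.ind with
    | _ x y =>
      simp only [Sym2.mem_iff, lo, hi, Sym2.lift_mk]
      constructor
      · rintro (rfl | rfl) <;> omega
      · rintro (h | h) <;>
        · have : ν u = ν x ∨ ν u = ν y := by omega
          rcases this with h' | h'
          exacts [Or.inl (hν_inj h'), Or.inr (hν_inj h')]
  have lohi : ∀ e : Sym2 V, e ∈ G.edgeSet → lo e < hi e ∧ hi e < n := by
    intro e he
    induction e using Sym2.ind with
    | _ x y =>
      have hadj : G.Adj x y := he
      have hxy : ν x ≠ ν y := fun h => hadj.ne (hν_inj h)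
      have h1 := hν_lt x
      have h2 := hν_lt y
      simp only [lo, hi, Sym2.lift_mk]
      omega
  -- index functions into ℝ
  let A : V → ℝ := fun v => (ν v : ℝ) + 1
  let I : G.edgeSet → ℝ := fun e => (lo e.1 : ℝ) + 1
  let J : G.edgeSet → ℝ := fun e => (hi e.1 : ℝ) + 1
  have hA1 : ∀ v, 1 ≤ A v := by
    intro v; have : (0:ℝ) ≤ (ν v : ℝ) := Nat.cast_nonneg _
    simp only [A]; linarith
  have hAN : ∀ v, A v ≤ N - 1 := by
    intro v
    have : (ν v : ℝ) + 1 ≤ (n : ℝ) := by exact_mod_cast hν_lt v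
    simp only [A, hN]; linarith
  have hI1 : ∀ e, 1 ≤ I e := by
    intro e; have : (0:ℝ) ≤ (lo e.1 : ℝ) := Nat.cast_nonneg _
    simp only [I]; linarith
  have hIJ : ∀ e, I e + 1 ≤ J e := by
    intro e
    have h := (lohi e.1 e.2).1
    have : (lo e.1 : ℝ) + 1 ≤ (hi e.1 : ℝ) := by exact_mod_cast h
    simp only [I, J]; linarith
  have hJN : ∀ e, J e ≤ N - 1 := by
    intro e
    have h := (lohi e.1 e.2).2
    have : (hi e.1 : ℝ) + 1 ≤ (n : ℝ) := by exact_mod_cast h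
    simp only [J, hN]; linarith
  refine ⟨Sum.elim (fun v => Ppath N (A v)) (fun e => Qpath N (I e) (J e)), ?_, ?_⟩
  · rintro (v | e)
    · exact rect_P N (A v)
    · exact rect_Q N (I e) (J e)
  · rintro (u | e) (w | f) hne
    · -- vertex-vertex
      have hne' : u ≠ w := fun h => hne (by rw [h])
      have hadj : (fullSubdivision G)ᶜ.Adj (Sum.inl u) (Sum.inl w) := by
        rw [SimpleGraph.compl_adj, fullSubdivision, SimpleGraph.fromRel_adj]
        simp [hne']
      simp only [hadj, true_iff, Sum.elim_inl]
      have hAne : ν u ≠ ν w := fun h => hne' (hν_inj h)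
      rcases lt_or_gt_of_ne hAne with h | h
      · exact PP_inter (by linarith [hA1 u]) (by simp only [A]; exact_mod_cast by omega) (hAN w)
      · rw [Set.inter_comm]
        exact PP_inter (by linarith [hA1 w]) (by simp only [A]; exact_mod_cast by omega) (hAN u)
    · -- vertex-edge
      have key : (fullSubdivision G)ᶜ.Adj (Sum.inl u) (Sum.inr f) ↔ u ∉ (f : Sym2 V) := by
        rw [SimpleGraph.compl_adj, fullSubdivision, SimpleGraph.fromRel_adj]
        simp
      rw [key]
      simp only [Sum.elim_inl, Sum.elim_inr]
      constructor
      · intro hnm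
        rw [mem_iff] at hnm
        push_neg at hnm
        obtain ⟨hm1, hm2⟩ := hnm
        have hlh := lohi f.1 f.2
        have hu := hν_lt u
        have : ν u + 1 ≤ lo f.1 ∨ (lo f.1 + 1 ≤ ν u ∧ ν u + 1 ≤ hi f.1) ∨
            hi f.1 + 1 ≤ ν u := by omega
        rcases this with h | ⟨h1, h2⟩ | h
        · exact PQ_lt (hA1 u) (by simp only [A, I]; exact_mod_cast by omega) (hIJ f) (hJN f)
        · exact PQ_mid (hI1 f) (by simp only [A, I]; exact_mod_cast by omega)
            (by simp only [A, J]; exact_mod_cast by omega) (hJN f)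
        · exact PQ_gt (hI1 f) (hIJ f) (by simp only [A, J]; exact_mod_cast by omega) (hAN u)
      · intro hne2
        by_contra hmem
        rw [mem_iff] at hmem
        refine PQ_disj (hI1 f) (hIJ f) (hJN f) ?_ hne2
        rcases hmem with h | h
        · exact Or.inl (by simp only [A, I, h])
        · exact Or.inr (by simp only [A, J, h])
    · -- edge-vertex
      have key : (fullSubdivision G)ᶜ.Adj (Sum.inr e) (Sum.inl w) ↔ w ∉ (e : Sym2 V) := by
        rw [SimpleGraph.compl_adj, fullSubdivision, SimpleGraph.fromRel_adj]
        simp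
      rw [key]
      simp only [Sum.elim_inl, Sum.elim_inr]
      rw [Set.inter_comm]
      constructor
      · intro hnm
        rw [mem_iff] at hnm
        push_neg at hnm
        obtain ⟨hm1, hm2⟩ := hnm
        have hlh := lohi e.1 e.2
        have hu := hν_lt w
        have : ν w + 1 ≤ lo e.1 ∨ (lo e.1 + 1 ≤ ν w ∧ ν w + 1 ≤ hi e.1) ∨
            hi e.1 + 1 ≤ ν w := by omega
        rcases this with h | ⟨h1, h2⟩ | h
        · exact PQ_lt (hA1 w) (by simp only [A, I]; exact_mod_cast by omega) (hIJ e) (hJN e)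
        · exact PQ_mid (hI1 e) (by simp only [A, I]; exact_mod_cast by omega)
            (by simp only [A, J]; exact_mod_cast by omega) (hJN e)
        · exact PQ_gt (hI1 e) (hIJ e) (by simp only [A, J]; exact_mod_cast by omega) (hAN w)
      · intro hne2
        by_contra hmem
        rw [mem_iff] at hmem
        refine PQ_disj (hI1 e) (hIJ e) (hJN e) ?_ hne2
        rcases hmem with h | h
        · exact Or.inl (by simp only [A, I, h])
        · exact Or.inr (by simp only [A, J, h])
    · -- edge-edge
      have hne' : e ≠ f := fun h => hne (by rw [h])
      have hadj : (fullSubdivision G)ᶜ.Adj (Sum.inr e) (Sum.inr f) := by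
        rw [SimpleGraph.compl_adj, fullSubdivision, SimpleGraph.fromRel_adj]
        simp [hne']
      simp only [hadj, true_iff, Sum.elim_inr]
      rcases le_total (J e) (J f) with h | h
      · exact QQ_inter (hI1 e) (by linarith [hIJ e]) (hJN e) (hI1 f) (by linarith [hIJ f])
          (hJN f) h
      · rw [Set.inter_comm]
        exact QQ_inter (hI1 f) (by linarith [hIJ f]) (hJN f) (hI1 e) (by linarith [hIJ e])
          (hJN e) h
end

section
/- Fix n ≥ 1 and for 1 ≤ i ≤ n let P(v_i) be the 2-bend path from (i,0) to (i,i) to (i+n,i) to (i+n,n+1). Then for all i ≠ j, the paths P(v_i) and P(v_j) intersect. -/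
/-- The 2-bend `v`-path `P(v_i)`: from `(i,0)` up to `(i,i)`, right to `(i+n,i)`,
and up to `(i+n,n+1)`. -/
def vPath (n i : ℕ) : Set (ℝ × ℝ) :=
  segment ℝ ((i : ℝ), 0) ((i : ℝ), (i : ℝ)) ∪
    segment ℝ ((i : ℝ), (i : ℝ)) ((i : ℝ) + n, (i : ℝ)) ∪
    segment ℝ ((i : ℝ) + n, (i : ℝ)) ((i : ℝ) + n, (n : ℝ) + 1)

/-- The 2-bend `w`-path `P(w_{ij})`: from `(j-1/4, i+1/4)` up to `(j-1/4, j+1/4)`,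
right to `(i+n-1/4, j+1/4)`, and up to `(i+n-1/4, n+1)`. -/
def wPath (n i j : ℕ) : Set (ℝ × ℝ) :=
  segment ℝ ((j : ℝ) - 1/4, (i : ℝ) + 1/4) ((j : ℝ) - 1/4, (j : ℝ) + 1/4) ∪
    segment ℝ ((j : ℝ) - 1/4, (j : ℝ) + 1/4) ((i : ℝ) + n - 1/4, (j : ℝ) + 1/4) ∪
    segment ℝ ((i : ℝ) + n - 1/4, (j : ℝ) + 1/4) ((i : ℝ) + n - 1/4, (n : ℝ) + 1)

lemma key (n i j : ℕ) (hn : 1 ≤ n) (hij : i < j) (hjn : j ≤ n) :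
    ((j : ℝ), (i : ℝ)) ∈ vPath n i ∩ vPath n j := by
  have hn0 : (0:ℝ) < n := by exact_mod_cast hn
  have hj0 : (0:ℝ) < j := by exact_mod_cast Nat.lt_of_lt_of_le (Nat.zero_lt_of_lt hij) le_rfl
  have hijR : (i:ℝ) < j := by exact_mod_cast hij
  have hjnR : (j:ℝ) ≤ n := by exact_mod_cast hjn
  constructor
  · -- middle segment of vPath n i
    apply Set.mem_union_left
    apply Set.mem_union_right
    refine ⟨1 - ((j:ℝ) - i)/n, ((j:ℝ) - i)/n, ?_, div_nonneg (by linarith) hn0.le, by ring, ?_⟩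
    · have : ((j:ℝ) - i)/n ≤ 1 := by
        rw [div_le_one hn0]; nlinarith [Nat.cast_nonneg (α := ℝ) i]
      linarith
    · apply Prod.ext <;> simp [Prod.smul_def] <;> field_simp <;> ring
  · -- first segment of vPath n j
    apply Set.mem_union_left
    apply Set.mem_union_left
    refine ⟨1 - (i:ℝ)/j, (i:ℝ)/j, ?_, by positivity, by ring, ?_⟩
    · have : (i:ℝ)/j ≤ 1 := by rw [div_le_one hj0]; linarith
      linarith
    · apply Prod.ext <;> simp [Prod.smul_def] <;> field_simp <;> ring

/-- For `1 ≤ i, j ≤ n` with `i ≠ j`, the 2-bend paths `P(v_i)` and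
`P(v_j)` intersect. -/
theorem vPaths_intersect (n : ℕ) (hn : 1 ≤ n) (i j : ℕ)
    (hi1 : 1 ≤ i) (hin : i ≤ n) (hj1 : 1 ≤ j) (hjn : j ≤ n) (hij : i ≠ j) :
    (vPath n i ∩ vPath n j).Nonempty := by
  rcases Nat.lt_or_ge i j with h | h
  · exact ⟨_, key n i j hn h hjn⟩
  · have h' : j < i := lt_of_le_of_ne h hij.symm
    have hp := key n j i hn h' hin
    exact ⟨_, hp.2, hp.1⟩
end

section
/- Fix n ≥ 1, let i < j ≤ n, and define the v-paths P(v_k) for 1 ≤ k ≤ n as the union of segments from (k,0) to (k,k), (k,k) to (k+n,k), and (k+n,k) to (k+n,n+1). Define the w-path P(w_{ij}) as the union of segments from (j−1/4, i+1/4) to (j−1/4, j+1/4), then to (i+n−1/4, j+1/4), then to (i+n−1/4, n+1). Then P(w_{ij}) intersects P(v_k) for every k ∉ {i,j}, and P(w_{ij}) is disjoint from P(v_i) and from P(v_j). -/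
lemma mem_seg_vert_s8 {x a b t : ℝ} (h1 : a ≤ t) (h2 : t ≤ b) :
    ((x, t) : ℝ × ℝ) ∈ segment ℝ (x, a) (x, b) := by
  have : t ∈ segment ℝ a b := by
    rw [segment_eq_Icc (h1.trans h2)]; exact ⟨h1, h2⟩
  obtain ⟨u, v, hu, hv, huv, ht⟩ := this
  simp only [smul_eq_mul] at ht
  refine ⟨u, v, hu, hv, huv, ?_⟩
  have : u • ((x, a) : ℝ × ℝ) + v • (x, b) = (u * x + v * x, u * a + v * b) := rfl
  rw [this, ht]
  have : u * x + v * x = x := by rw [← add_mul, huv, one_mul]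
  rw [this]

lemma mem_seg_horiz_s8 {y a b t : ℝ} (h1 : a ≤ t) (h2 : t ≤ b) :
    ((t, y) : ℝ × ℝ) ∈ segment ℝ (a, y) (b, y) := by
  have : t ∈ segment ℝ a b := by
    rw [segment_eq_Icc (h1.trans h2)]; exact ⟨h1, h2⟩
  obtain ⟨u, v, hu, hv, huv, ht⟩ := this
  simp only [smul_eq_mul] at ht
  refine ⟨u, v, hu, hv, huv, ?_⟩
  have : u • ((a, y) : ℝ × ℝ) + v • (b, y) = (u * a + v * b, u * y + v * y) := rfl
  rw [this, ht]
  have : u * y + v * y = y := by rw [← add_mul, huv, one_mul]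
  rw [this]

lemma seg_coords {a b c d : ℝ} {p : ℝ × ℝ} (h : p ∈ segment ℝ (a, b) (c, d)) :
    p.1 ∈ segment ℝ a c ∧ p.2 ∈ segment ℝ b d := by
  obtain ⟨u, v, hu, hv, huv, hp⟩ := h
  exact ⟨⟨u, v, hu, hv, huv, by rw [← hp]; rfl⟩, ⟨u, v, hu, hv, huv, by rw [← hp]; rfl⟩⟩

lemma seg_le {a c t : ℝ} (hac : a ≤ c) (h : t ∈ segment ℝ a c) : a ≤ t ∧ t ≤ c := by
  rw [segment_eq_Icc hac] at h; exact h

set_option maxHeartbeats 2000000 in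
/-- For `1 ≤ i < j ≤ n`, the `w`-path `P(w_{ij})` intersects every
`v`-path `P(v_k)` with `k ∉ {i, j}` (`1 ≤ k ≤ n`) and is disjoint from `P(v_i)` and
`P(v_j)`. -/
theorem wPath_meets_exactly_non_neighbours (n : ℕ) (hn : 1 ≤ n) (i j : ℕ)
    (hi1 : 1 ≤ i) (hij : i < j) (hjn : j ≤ n) :
    (∀ k : ℕ, 1 ≤ k → k ≤ n → k ≠ i → k ≠ j →
      (wPath n i j ∩ vPath n k).Nonempty) ∧
    wPath n i j ∩ vPath n i = ∅ ∧ wPath n i j ∩ vPath n j = ∅ := by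
  have hiR : (1 : ℝ) ≤ i := by exact_mod_cast hi1
  have hijR : (i : ℝ) + 1 ≤ j := by exact_mod_cast hij
  have hjnR : (j : ℝ) ≤ n := by exact_mod_cast hjn
  have hnR : (1 : ℝ) ≤ n := by exact_mod_cast hn
  refine ⟨?_, ?_, ?_⟩
  · intro k hk1 hkn hki hkj
    have hk1R : (1 : ℝ) ≤ k := by exact_mod_cast hk1
    have hknR : (k : ℝ) ≤ n := by exact_mod_cast hkn
    rcases lt_trichotomy k i with hlt | heq | hgt
    · -- k < i: witness (k+n, j+1/4)
      have hkiR : (k : ℝ) + 1 ≤ i := by exact_mod_cast hlt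
      refine ⟨((k : ℝ) + n, (j : ℝ) + 1/4), ?_, ?_⟩
      · exact Set.mem_union_left _ (Set.mem_union_right _
          (mem_seg_horiz_s8 (by linarith) (by linarith)))
      · exact Set.mem_union_right _ (mem_seg_vert_s8 (by linarith) (by linarith))
    · exact absurd heq hki
    · rcases lt_trichotomy k j with hlt2 | heq2 | hgt2
      · -- i < k < j: witness (j-1/4, k)
        have h1 : (i : ℝ) + 1 ≤ k := by exact_mod_cast hgt
        have h2 : (k : ℝ) + 1 ≤ j := by exact_mod_cast hlt2
        refine ⟨((j : ℝ) - 1/4, (k : ℝ)), ?_, ?_⟩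
        · exact Set.mem_union_left _ (Set.mem_union_left _
            (mem_seg_vert_s8 (by linarith) (by linarith)))
        · exact Set.mem_union_left _ (Set.mem_union_right _
            (mem_seg_horiz_s8 (by linarith) (by linarith)))
      · exact absurd heq2 hkj
      · -- k > j: witness (k, j+1/4)
        have h2 : (j : ℝ) + 1 ≤ k := by exact_mod_cast hgt2
        refine ⟨((k : ℝ), (j : ℝ) + 1/4), ?_, ?_⟩
        · exact Set.mem_union_left _ (Set.mem_union_right _
            (mem_seg_horiz_s8 (by linarith) (by linarith)))
        · exact Set.mem_union_left _ (Set.mem_union_left _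
            (mem_seg_vert_s8 (by linarith) (by linarith)))
  · apply Set.eq_empty_iff_forall_notMem.mpr
    rintro ⟨px, py⟩ ⟨hw, hv⟩
    rcases hw with (h | h) | h <;> rcases hv with (g | g) | g <;>
      · obtain ⟨hw1, hw2⟩ := seg_coords h
        obtain ⟨hv1, hv2⟩ := seg_coords g
        have A := seg_le (by linarith) hw1
        have B := seg_le (by linarith) hw2
        have C := seg_le (by linarith) hv1
        have D := seg_le (by linarith) hv2
        linarith [A.1, A.2, B.1, B.2, C.1, C.2, D.1, D.2]
  · apply Set.eq_empty_iff_forall_notMem.mpr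
    rintro ⟨px, py⟩ ⟨hw, hv⟩
    rcases hw with (h | h) | h <;> rcases hv with (g | g) | g <;>
      · obtain ⟨hw1, hw2⟩ := seg_coords h
        obtain ⟨hv1, hv2⟩ := seg_coords g
        have A := seg_le (by linarith) hw1
        have B := seg_le (by linarith) hw2
        have C := seg_le (by linarith) hv1
        have D := seg_le (by linarith) hv2
        linarith [A.1, A.2, B.1, B.2, C.1, C.2, D.1, D.2]
end

section
/- Fix n ≥ 1 and suppose i < j ≤ n and i' < j' ≤ n with (i,j) ≠ (i',j'). Let P be the union of segments from (j−1/4, i+1/4) to (j−1/4, j+1/4) to (i+n−1/4, j+1/4) to (i+n−1/4, n+1), and let P' be defined analogously with (i',j'). Then P and P' intersect. -/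
lemma seg_vert (x y1 y2 c : ℝ) (h1 : y1 ≤ c) (h2 : c ≤ y2) :
    ((x, c) : ℝ × ℝ) ∈ segment ℝ (x, y1) (x, y2) := by
  rcases eq_or_lt_of_le (h1.trans h2) with h | h
  · have hc : c = y1 := le_antisymm (h ▸ h2) h1
    subst hc; exact left_mem_segment _ _ _
  · refine ⟨(y2 - c) / (y2 - y1), (c - y1) / (y2 - y1), ?_, ?_, ?_, ?_⟩
    · apply div_nonneg <;> linarith
    · apply div_nonneg <;> linarith
    · have hne : y2 - y1 ≠ 0 := by linarith
      field_simp
      ring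
    · have hne : y2 - y1 ≠ 0 := by linarith
      simp only [Prod.smul_mk, Prod.mk_add_mk, Prod.mk.injEq, smul_eq_mul]
      constructor <;> (field_simp; ring)

lemma seg_horiz (y x1 x2 c : ℝ) (h1 : x1 ≤ c) (h2 : c ≤ x2) :
    ((c, y) : ℝ × ℝ) ∈ segment ℝ (x1, y) (x2, y) := by
  rcases eq_or_lt_of_le (h1.trans h2) with h | h
  · have hc : c = x1 := le_antisymm (h ▸ h2) h1
    subst hc; exact left_mem_segment _ _ _
  · refine ⟨(x2 - c) / (x2 - x1), (c - x1) / (x2 - x1), ?_, ?_, ?_, ?_⟩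
    · apply div_nonneg <;> linarith
    · apply div_nonneg <;> linarith
    · have hne : x2 - x1 ≠ 0 := by linarith
      field_simp
      ring
    · have hne : x2 - x1 ≠ 0 := by linarith
      simp only [Prod.smul_mk, Prod.mk_add_mk, Prod.mk.injEq, smul_eq_mul]
      constructor <;> (field_simp; ring)

lemma cross (n i j i' j' : ℕ) (hi1 : 1 ≤ i) (hij : i < j)
    (hij' : i' < j') (hj'n : j' ≤ n) (hlt : j < j') :
    (wPath n i j ∩ wPath n i' j').Nonempty := by
  by_cases h : i' < j
  · refine ⟨((j' : ℝ) - 1/4, (j : ℝ) + 1/4), Or.inl (Or.inr ?_), Or.inl (Or.inl ?_)⟩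
    · apply seg_horiz
      · have : (j : ℝ) ≤ j' := by exact_mod_cast hlt.le
        linarith
      · have h1 : (j' : ℝ) ≤ n := by exact_mod_cast hj'n
        have h2 : (1 : ℝ) ≤ i := by exact_mod_cast hi1
        linarith
    · apply seg_vert
      · have : (i' : ℝ) ≤ j := by exact_mod_cast Nat.le_of_lt h
        linarith
      · have : (j : ℝ) ≤ j' := by exact_mod_cast hlt.le
        linarith
  · push_neg at h
    refine ⟨((i : ℝ) + n - 1/4, (j' : ℝ) + 1/4), Or.inr ?_, Or.inl (Or.inr ?_)⟩
    · apply seg_vert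
      · have : (j : ℝ) ≤ j' := by exact_mod_cast hlt.le
        linarith
      · have : (j' : ℝ) ≤ n := by exact_mod_cast hj'n
        linarith
    · apply seg_horiz
      · have h1 : (j' : ℝ) ≤ n := by exact_mod_cast hj'n
        have h2 : (1 : ℝ) ≤ i := by exact_mod_cast hi1
        linarith
      · have : (i : ℝ) ≤ i' := by
          exact_mod_cast (Nat.lt_of_lt_of_le hij h).le
        linarith

/-- The `w`-paths for distinct edges mutually intersect: if
`1 ≤ i < j ≤ n` and `1 ≤ i' < j' ≤ n` with `(i,j) ≠ (i',j')`, then `P(w_{ij})` and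
`P(w_{i'j'})` intersect. -/
theorem wPaths_intersect (n : ℕ) (hn : 1 ≤ n) (i j i' j' : ℕ)
    (hi1 : 1 ≤ i) (hij : i < j) (hjn : j ≤ n)
    (hi'1 : 1 ≤ i') (hij' : i' < j') (hj'n : j' ≤ n)
    (hne : (i, j) ≠ (i', j')) :
    (wPath n i j ∩ wPath n i' j').Nonempty := by
  rcases lt_trichotomy j j' with hlt | heq | hgt
  · exact cross n i j i' j' hi1 hij hij' hj'n hlt
  · subst heq
    exact ⟨((j : ℝ) - 1/4, (j : ℝ) + 1/4),
      Or.inl (Or.inr (left_mem_segment _ _ _)),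
      Or.inl (Or.inr (left_mem_segment _ _ _))⟩
  · obtain ⟨p, hp1, hp2⟩ := cross n i' j' i j hi'1 hij' hij hjn hgt
    exact ⟨p, hp2, hp1⟩
end

section
/- If an edge e of a graph G is subdivided k ≥ 3 times in a subdivision H, then H is also a full subdivision (every edge subdivided once or twice) of the graph G' obtained from G by subdividing e once. Consequently, every full subdivision of some graph is a subdivision, with each edge subdivided exactly once or twice, of some (possibly different) graph. -/
/-- `IsSubdivisionWith H G P`: the graph `H` is obtained from `G` by replacing each
edge `e = uv` of `G` by a path from `u` to `v` through `m e` new internal vertices,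
where every multiplicity `m e` satisfies `1 ≤ m e` and the predicate `P`; distinct
edges use disjoint sets of new vertices, and `H` has no other vertices or edges. -/
def IsSubdivisionWith {V : Type*} {W : Type*} (H : SimpleGraph W) (G : SimpleGraph V)
    (P : ℕ → Prop) : Prop :=
  ∃ (ι : V → W) (m : G.edgeSet → ℕ) (w : (e : G.edgeSet) → Fin (m e) → W)
    (ends : G.edgeSet → V × V),
    (∀ e, 1 ≤ m e) ∧ (∀ e, P (m e)) ∧
    (∀ e : G.edgeSet, (e : Sym2 V) = s((ends e).1, (ends e).2)) ∧
    Function.Injective (fun x : V ⊕ (Σ e : G.edgeSet, Fin (m e)) =>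
      Sum.elim ι (fun q => w q.1 q.2) x) ∧
    (∀ x : W, (∃ v, ι v = x) ∨ ∃ e i, w e i = x) ∧
    (∀ x y : W, H.Adj x y ↔ ∃ e : G.edgeSet,
      (∃ i j : Fin (m e), ((i : ℕ) + 1 = j ∨ (j : ℕ) + 1 = i) ∧ x = w e i ∧ y = w e j) ∨
      (∃ h : 0 < m e,
        (x = ι (ends e).1 ∧ y = w e ⟨0, h⟩) ∨ (y = ι (ends e).1 ∧ x = w e ⟨0, h⟩) ∨
        (x = ι (ends e).2 ∧ y = w e ⟨m e - 1, Nat.sub_lt h Nat.one_pos⟩) ∨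
        (y = ι (ends e).2 ∧ x = w e ⟨m e - 1, Nat.sub_lt h Nat.one_pos⟩)))

/-- `H` is a full subdivision of `G`: each edge of `G` is subdivided at least once. -/
def IsFullSubdivisionOf {V : Type*} {W : Type*} (H : SimpleGraph W) (G : SimpleGraph V) : Prop :=
  IsSubdivisionWith H G (fun _ => True)

namespace FS12

variable {V W : Type} {G : SimpleGraph V}

lemma finmk {n a b : ℕ} {ha : a < n} {hb : b < n} (h : a = b) :
    (⟨a, ha⟩ : Fin n) = ⟨b, hb⟩ := by subst h; rfl


/-- number of segments into which an edge with `m e` internal vertices is cut -/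
def kk (m : G.edgeSet → ℕ) (e : G.edgeSet) : ℕ := (m e + 1) / 2

/-- size (number of internal vertices) of segment `t` (junk for `t ≥ kk`) -/
def mSeg (m : G.edgeSet → ℕ) (e : G.edgeSet) (t : ℕ) : ℕ :=
  if t + 1 = kk m e then m e - 2 * t else 1

lemma idx_lt (m : G.edgeSet → ℕ) (e : G.edgeSet) (t : ℕ) (ht : t < kk m e)
    (i : ℕ) (hi : i < mSeg m e t) : 2 * t + i < m e := by
  unfold mSeg kk at *
  split at hi <;> omega

lemma mSeg_pos (m : G.edgeSet → ℕ) (e : G.edgeSet) (t : ℕ) : 0 < mSeg m e t := by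
  unfold mSeg kk; split <;> omega

lemma mSeg_12 (m : G.edgeSet → ℕ) (e : G.edgeSet) (t : ℕ) :
    mSeg m e t = 1 ∨ mSeg m e t = 2 := by
  unfold mSeg kk; split <;> omega

lemma segCases (m : G.edgeSet → ℕ) (e : G.edgeSet) (t i : ℕ) (hi : i < mSeg m e t) :
    i = 0 ∨ (i = 1 ∧ t + 1 = kk m e) := by
  unfold mSeg kk at *
  split at hi <;> omega

variable (ι : V → W) (m : G.edgeSet → ℕ) (w : (e : G.edgeSet) → Fin (m e) → W)
  (ends : G.edgeSet → V × V)

/-- the `t`-th node on the path replacing edge `e` (endpoints of segments) -/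
def node (e : G.edgeSet) (t : ℕ) : W :=
  if h0 : t = 0 then ι (ends e).1
  else if h1 : t < kk m e then w e ⟨2 * t - 1, by unfold kk at h1; omega⟩
  else ι (ends e).2

/-- the vertices of `W` that survive as vertices of the new graph -/
def kept (x : W) : Prop :=
  (∃ v, ι v = x) ∨
    ∃ (e : G.edgeSet) (a : Fin (m e)), Odd (a : ℕ) ∧ (a : ℕ) + 1 < m e ∧ w e a = x

def G' : SimpleGraph {x : W // kept ι m w x} where
  Adj x y := x ≠ y ∧ ∃ (e : G.edgeSet) (t : ℕ), t < kk m e ∧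
    ((x.1 = node ι m w ends e t ∧ y.1 = node ι m w ends e (t + 1)) ∨
     (y.1 = node ι m w ends e t ∧ x.1 = node ι m w ends e (t + 1)))
  symm := ⟨by
    rintro x y ⟨hne, e, t, ht, h⟩
    exact ⟨hne.symm, e, t, ht, h.symm⟩⟩
  loopless := ⟨fun x h => h.1 rfl⟩

/-- normalized description of adjacency in `H` in terms of the new graph's data -/
def Core (x y : W) : Prop :=
  ∃ (e : G.edgeSet) (t : ℕ), t < kk m e ∧
    ((∃ i j : ℕ, i < mSeg m e t ∧ j < mSeg m e t ∧ (i + 1 = j ∨ j + 1 = i) ∧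
        (∃ h, w e ⟨2 * t + i, h⟩ = x) ∧ (∃ h, w e ⟨2 * t + j, h⟩ = y)) ∨
     (x = node ι m w ends e t ∧ ∃ h, w e ⟨2 * t, h⟩ = y) ∨
     (y = node ι m w ends e t ∧ ∃ h, w e ⟨2 * t, h⟩ = x) ∨
     (x = node ι m w ends e (t + 1) ∧ ∃ h, w e ⟨2 * t + (mSeg m e t - 1), h⟩ = y) ∨
     (y = node ι m w ends e (t + 1) ∧ ∃ h, w e ⟨2 * t + (mSeg m e t - 1), h⟩ = x))

lemma core_symm {x y : W} (h : Core ι m w ends x y) : Core ι m w ends y x := by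
  obtain ⟨e, t, ht, hcl⟩ := h
  refine ⟨e, t, ht, ?_⟩
  rcases hcl with ⟨i, j, hi, hj, hor, hx, hy⟩ | h | h | h | h
  · exact Or.inl ⟨j, i, hj, hi, hor.symm, hy, hx⟩
  · exact Or.inr (Or.inr (Or.inl h))
  · exact Or.inr (Or.inl h)
  · exact Or.inr (Or.inr (Or.inr (Or.inr h)))
  · exact Or.inr (Or.inr (Or.inr (Or.inl h)))

lemma core_step (e : G.edgeSet) (a : ℕ) (hab : a + 1 < m e) (x y : W)
    (hx : ∃ h, w e ⟨a, h⟩ = x) (hy : ∃ h, w e ⟨a + 1, h⟩ = y) :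
    Core ι m w ends x y := by
  obtain ⟨hxh, rfl⟩ := hx
  obtain ⟨hyh, rfl⟩ := hy
  rcases Nat.even_or_odd a with ⟨c, hc⟩ | ⟨c, hc⟩
  · subst hc
    by_cases h3 : c + c + 2 < m e
    · -- the vertex at index c+c+1 is a chosen node: clause C5 with t = c
      refine ⟨e, c, by unfold kk; omega, Or.inr (Or.inr (Or.inr (Or.inr ⟨?_, ?_⟩)))⟩
      · unfold node
        rw [dif_neg (by omega), dif_pos (by unfold kk; omega)]
        exact congrArg (w e) (finmk (by omega))
      · have hms : mSeg m e c = 1 := by unfold mSeg kk; rw [if_neg (by omega)]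
        exact ⟨by omega, congrArg (w e) (finmk (by omega))⟩
    · -- last segment, size 2: internal pair (i = 0, j = 1) in segment c
      have hms : mSeg m e c = 2 := by unfold mSeg kk; rw [if_pos (by omega)]; omega
      refine ⟨e, c, by unfold kk; omega,
        Or.inl ⟨0, 1, by omega, by omega, Or.inl rfl,
          ⟨by omega, congrArg (w e) (finmk (by omega))⟩,
          ⟨by omega, congrArg (w e) (finmk (by omega))⟩⟩⟩
  · subst hc
    -- x is itself a chosen node: clause C2 with t = c + 1
    refine ⟨e, c + 1, by unfold kk; omega,
      Or.inr (Or.inl ⟨?_, by omega, congrArg (w e) (finmk (by omega))⟩)⟩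
    unfold node
    rw [dif_neg (by omega), dif_pos (by unfold kk; omega)]
    exact congrArg (w e) (finmk (by omega))

lemma core_end1 (e : G.edgeSet) (x y : W) (hx : x = ι (ends e).1)
    (hy : ∃ h, w e ⟨0, h⟩ = y) : Core ι m w ends x y := by
  obtain ⟨h0, rfl⟩ := hy
  refine ⟨e, 0, by unfold kk; omega,
    Or.inr (Or.inl ⟨?_, by omega, congrArg (w e) (finmk (by omega))⟩)⟩
  rw [hx]; unfold node; rw [dif_pos rfl]

lemma core_end2 (e : G.edgeSet) (x y : W) (hx : x = ι (ends e).2)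
    (hy : ∃ h, w e ⟨m e - 1, h⟩ = y) : Core ι m w ends x y := by
  obtain ⟨h0, rfl⟩ := hy
  have hkk : kk m e = (m e + 1) / 2 := rfl
  have hms : mSeg m e (kk m e - 1) = m e - 2 * (kk m e - 1) := by
    unfold mSeg; rw [if_pos (by omega)]
  refine ⟨e, kk m e - 1, by omega,
    Or.inr (Or.inr (Or.inr (Or.inl ⟨?_, by omega, congrArg (w e) (finmk (by omega))⟩)))⟩
  rw [hx, show kk m e - 1 + 1 = kk m e by omega]
  unfold node
  rw [dif_neg (by omega), dif_neg (by omega)]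

end FS12

open FS12 in
/-- Every full subdivision of some graph is also a subdivision,
with each edge subdivided exactly once or exactly twice, of some (possibly different)
graph: repeatedly, an edge subdivided `k ≥ 3` times in `H` can be regarded as an edge
of the graph obtained by subdividing that edge once, subdivided fewer times. -/
theorem fullSubdivision_is_one_or_two_subdivision {V W : Type}
    (G : SimpleGraph V) (H : SimpleGraph W) (hsub : IsFullSubdivisionOf H G) :
    ∃ (V' : Type) (G' : SimpleGraph V'),
      IsSubdivisionWith H G' (fun m => m = 1 ∨ m = 2) := by
  classical
  obtain ⟨ι, m, w, ends, hm1, -, hend, hinj, hsurj, hadj⟩ := hsub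
  refine ⟨{x : W // FS12.kept ι m w x}, FS12.G' ι m w ends, ?_⟩
  -- basic consequences of injectivity
  have hι : Function.Injective ι := by
    intro a b h
    have := hinj (a₁ := Sum.inl a) (a₂ := Sum.inl b) (by simpa using h)
    simpa using this
  have hιw : ∀ v e a, ι v ≠ w e a := by
    intro v e a h
    have := hinj (a₁ := Sum.inl v) (a₂ := Sum.inr ⟨e, a⟩) (by simpa using h)
    simp at this
  have hww : ∀ {e a e' a'}, w e a = w e' a' → e = e' ∧ (a : ℕ) = (a' : ℕ) := by
    intro e a e' a' h
    have h2 := hinj (a₁ := Sum.inr ⟨e, a⟩) (a₂ := Sum.inr ⟨e', a'⟩) (by simpa using h)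
    rw [Sum.inr.injEq, Sigma.mk.inj_iff] at h2
    obtain ⟨he, ha⟩ := h2
    subst he
    exact ⟨rfl, congrArg Fin.val (eq_of_heq ha)⟩
  have hneEnds : ∀ e : G.edgeSet, (ends e).1 ≠ (ends e).2 := by
    intro e
    have h2 := e.2
    rw [hend e] at h2
    exact ((SimpleGraph.mem_edgeSet G).mp h2).ne
  -- the nodes on a path are pairwise distinct
  have hnodeInj : ∀ (e : G.edgeSet) (t1 t2 : ℕ), t1 ≤ FS12.kk m e → t2 ≤ FS12.kk m e →
      FS12.node ι m w ends e t1 = FS12.node ι m w ends e t2 → t1 = t2 := by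
    intro e t1 t2 h1 h2 h
    unfold FS12.node at h
    split_ifs at h
    all_goals first
      | omega
      | exact absurd (hι h) (hneEnds e)
      | exact absurd (hι h.symm) (hneEnds e)
      | exact absurd h (hιw _ _ _)
      | exact absurd h.symm (hιw _ _ _)
      | (have h9 : 2 * t1 - 1 = 2 * t2 - 1 := (hww h).2; omega)
  have hkept : ∀ (e : G.edgeSet) (t : ℕ), FS12.kept ι m w (FS12.node ι m w ends e t) := by
    intro e t
    unfold FS12.node
    split_ifs with h0 h1
    · exact Or.inl ⟨_, rfl⟩
    · refine Or.inr ⟨e, ⟨2 * t - 1, by unfold FS12.kk at h1; omega⟩, ⟨t - 1, show (2 * t - 1 : ℕ) = 2 * (t - 1) + 1 by omega⟩, ?_, rfl⟩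
      show 2 * t - 1 + 1 < m e
      unfold FS12.kk at h1; omega
    · exact Or.inl ⟨_, rfl⟩
  have hnodeNe : ∀ (e : G.edgeSet) (t : ℕ), t < FS12.kk m e →
      FS12.node ι m w ends e t ≠ FS12.node ι m w ends e (t + 1) := by
    intro e t ht h
    have := hnodeInj e t (t + 1) (by omega) (by omega) h
    omega
  have hedge : ∀ (e : G.edgeSet) (t : ℕ), t < FS12.kk m e →
      (FS12.G' ι m w ends).Adj ⟨FS12.node ι m w ends e t, hkept e t⟩
        ⟨FS12.node ι m w ends e (t + 1), hkept e (t + 1)⟩ := by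
    intro e t ht
    exact ⟨fun hh => hnodeNe e t ht (congrArg Subtype.val hh), e, t, ht, Or.inl ⟨rfl, rfl⟩⟩
  -- decode an edge of G'
  have hdecEx : ∀ f : (FS12.G' ι m w ends).edgeSet, ∃ (e : G.edgeSet) (t : ℕ),
      t < FS12.kk m e ∧ (f : Sym2 {x : W // FS12.kept ι m w x}) =
        s(⟨FS12.node ι m w ends e t, hkept e t⟩,
          ⟨FS12.node ι m w ends e (t + 1), hkept e (t + 1)⟩) := by
    have key : ∀ q : Sym2 {x : W // FS12.kept ι m w x}, q ∈ (FS12.G' ι m w ends).edgeSet →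
        ∃ (e : G.edgeSet) (t : ℕ), t < FS12.kk m e ∧ q =
          s(⟨FS12.node ι m w ends e t, hkept e t⟩,
            ⟨FS12.node ι m w ends e (t + 1), hkept e (t + 1)⟩) := by
      intro q
      induction q using Sym2.ind with
      | _ x y =>
        intro hq
        obtain ⟨hne, e, t, ht, hc⟩ := (SimpleGraph.mem_edgeSet (FS12.G' ι m w ends)).mp hq
        refine ⟨e, t, ht, ?_⟩
        rcases hc with ⟨h1, h2⟩ | ⟨h1, h2⟩
        · rw [show x = (⟨FS12.node ι m w ends e t, hkept e t⟩ :
              {x : W // FS12.kept ι m w x}) from Subtype.ext h1,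
            show y = (⟨FS12.node ι m w ends e (t + 1), hkept e (t + 1)⟩ :
              {x : W // FS12.kept ι m w x}) from Subtype.ext h2]
        · rw [show y = (⟨FS12.node ι m w ends e t, hkept e t⟩ :
              {x : W // FS12.kept ι m w x}) from Subtype.ext h1,
            show x = (⟨FS12.node ι m w ends e (t + 1), hkept e (t + 1)⟩ :
              {x : W // FS12.kept ι m w x}) from Subtype.ext h2, Sym2.eq_swap]
    exact fun f => key f.1 f.2
  choose eF tF htF hfF using hdecEx
  -- uniqueness of the decoding
  have hwe : ∀ (e : G.edgeSet) (s : ℕ) (e' : G.edgeSet) (s' : ℕ), 1 ≤ s → s < FS12.kk m e →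
      FS12.node ι m w ends e s = FS12.node ι m w ends e' s' → e = e' := by
    intro e s e' s' hs1 hs2 h
    unfold FS12.node at h
    rw [dif_neg (by omega), dif_pos hs2] at h
    split_ifs at h with b1 b2
    · exact absurd h.symm (hιw _ _ _)
    · exact (hww h).1
    · exact absurd h.symm (hιw _ _ _)
  have hL3 : ∀ (e : G.edgeSet) (t : ℕ) (e' : G.edgeSet) (t' : ℕ),
      t < FS12.kk m e → t' < FS12.kk m e' →
      ((FS12.node ι m w ends e t = FS12.node ι m w ends e' t' ∧
        FS12.node ι m w ends e (t + 1) = FS12.node ι m w ends e' (t' + 1)) ∨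
       (FS12.node ι m w ends e t = FS12.node ι m w ends e' (t' + 1) ∧
        FS12.node ι m w ends e (t + 1) = FS12.node ι m w ends e' t')) →
      e = e' ∧ t = t' := by
    intro e t e' t' ht ht' hcase
    have hee : e = e' := by
      by_cases h1 : 1 ≤ t
      · rcases hcase with ⟨ha, _⟩ | ⟨ha, _⟩ <;> exact hwe e t e' _ h1 ht ha
      · by_cases h2 : t + 1 < FS12.kk m e
        · rcases hcase with ⟨_, hb⟩ | ⟨_, hb⟩ <;> exact hwe e (t + 1) e' _ (by omega) h2 hb
        · by_cases h1' : 1 ≤ t'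
          · rcases hcase with ⟨ha, _⟩ | ⟨_, hb⟩
            · exact (hwe e' t' e t h1' ht' ha.symm).symm
            · exact (hwe e' t' e (t + 1) h1' ht' hb.symm).symm
          · by_cases h2' : t' + 1 < FS12.kk m e'
            · rcases hcase with ⟨_, hb⟩ | ⟨ha, _⟩
              · exact (hwe e' (t' + 1) e (t + 1) (by omega) h2' hb.symm).symm
              · exact (hwe e' (t' + 1) e t (by omega) h2' ha.symm).symm
            · have he0 : t = 0 := by omega
              have he0' : t' = 0 := by omega
              subst he0; subst he0'
              have hn0 : FS12.node ι m w ends e 0 = ι (ends e).1 := by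
                unfold FS12.node; rw [dif_pos rfl]
              have hn1 : FS12.node ι m w ends e 1 = ι (ends e).2 := by
                unfold FS12.node; rw [dif_neg one_ne_zero, dif_neg (by omega)]
              have hn0' : FS12.node ι m w ends e' 0 = ι (ends e').1 := by
                unfold FS12.node; rw [dif_pos rfl]
              have hn1' : FS12.node ι m w ends e' 1 = ι (ends e').2 := by
                unfold FS12.node; rw [dif_neg one_ne_zero, dif_neg (by omega)]
              apply Subtype.ext
              rw [hend e, hend e']
              rcases hcase with ⟨ha, hb⟩ | ⟨ha, hb⟩
              · rw [hn0, hn0'] at ha; rw [hn1, hn1'] at hb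
                rw [hι ha, hι hb]
              · rw [hn0, hn1'] at ha; rw [hn1, hn0'] at hb
                rw [hι ha, hι hb, Sym2.eq_swap]
    subst hee
    refine ⟨rfl, ?_⟩
    rcases hcase with ⟨ha, _⟩ | ⟨ha, hb⟩
    · exact hnodeInj e t t' (by omega) (by omega) ha
    · have h4 := hnodeInj e t (t' + 1) (by omega) (by omega) ha
      have h5 := hnodeInj e (t + 1) t' (by omega) (by omega) hb
      omega
  have huniq : ∀ (f : (FS12.G' ι m w ends).edgeSet) (e : G.edgeSet) (t : ℕ),
      t < FS12.kk m e →
      (f : Sym2 {x : W // FS12.kept ι m w x}) =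
        s(⟨FS12.node ι m w ends e t, hkept e t⟩,
          ⟨FS12.node ι m w ends e (t + 1), hkept e (t + 1)⟩) →
      eF f = e ∧ tF f = t := by
    intro f e t ht hf
    have h2 := (hfF f).symm.trans hf
    rw [Sym2.eq_iff] at h2
    apply hL3 _ _ _ _ (htF f) ht
    rcases h2 with ⟨u1, u2⟩ | ⟨u1, u2⟩
    · exact Or.inl ⟨congrArg Subtype.val u1, congrArg Subtype.val u2⟩
    · exact Or.inr ⟨congrArg Subtype.val u1, congrArg Subtype.val u2⟩
  have hgetf : ∀ (e : G.edgeSet) (t : ℕ), t < FS12.kk m e →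
      ∃ f : (FS12.G' ι m w ends).edgeSet, eF f = e ∧ tF f = t := by
    intro e t ht
    refine ⟨⟨_, (FS12.G' ι m w ends).mem_edgeSet.mpr (hedge e t ht)⟩, ?_⟩
    exact huniq ⟨_, (FS12.G' ι m w ends).mem_edgeSet.mpr (hedge e t ht)⟩ e t ht rfl
  have hnotKept : ∀ (e : G.edgeSet) (t : ℕ), t < FS12.kk m e → ∀ (i : ℕ)
      (hi : i < FS12.mSeg m e t) (hlt : 2 * t + i < m e),
      ¬ FS12.kept ι m w (w e ⟨2 * t + i, hlt⟩) := by
    intro e t ht i hi hlt hkpt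
    rcases hkpt with ⟨v, hv⟩ | ⟨e', a', hodd, hlt', hw'⟩
    · exact hιw v e _ hv
    · obtain ⟨he', hval⟩ := hww hw'
      subst he'
      have hval' : (a' : ℕ) = 2 * t + i := hval
      obtain ⟨c, hc⟩ := hodd
      rcases FS12.segCases m _ t i hi with h0 | ⟨h1, hk⟩
      · omega
      · unfold FS12.kk at hk; omega
  -- now assemble the subdivision data for G'
  refine ⟨Subtype.val,
    fun f => FS12.mSeg m (eF f) (tF f),
    fun f i => w (eF f) ⟨2 * tF f + (i : ℕ), FS12.idx_lt m (eF f) (tF f) (htF f) i i.2⟩,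
    fun f => (⟨FS12.node ι m w ends (eF f) (tF f), hkept _ _⟩,
              ⟨FS12.node ι m w ends (eF f) (tF f + 1), hkept _ _⟩),
    fun f => FS12.mSeg_pos m (eF f) (tF f),
    fun f => FS12.mSeg_12 m (eF f) (tF f),
    fun f => hfF f,
    ?_, ?_, ?_⟩
  · -- injectivity
    intro a b h
    rcases a with v | ⟨f, i⟩ <;> rcases b with v' | ⟨f', i'⟩ <;>
      simp only [Sum.elim_inl, Sum.elim_inr] at h
    · exact congrArg Sum.inl (Subtype.ext h)
    · exact absurd (h ▸ v.2) (hnotKept (eF f') (tF f') (htF f') _ i'.2 _)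
    · exact absurd (h ▸ v'.2) (hnotKept (eF f) (tF f) (htF f) _ i.2 _)
    · obtain ⟨he, hval⟩ := hww h
      have hval' : 2 * tF f + (i : ℕ) = 2 * tF f' + (i' : ℕ) := hval
      have hk2 : FS12.kk m (eF f) = FS12.kk m (eF f') := congrArg (FS12.kk m) he
      have hi2 : (i : ℕ) < FS12.mSeg m (eF f) (tF f) := i.2
      have hi2' : (i' : ℕ) < FS12.mSeg m (eF f') (tF f') := i'.2
      have hs1 := FS12.segCases m (eF f) (tF f) i hi2
      have hs2 := FS12.segCases m (eF f') (tF f') i' hi2'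
      have htt : tF f = tF f' := by omega
      have hii : (i : ℕ) = (i' : ℕ) := by omega
      have hff : f = f' := by
        apply Subtype.ext
        rw [hfF f, hfF f']
        exact congrArg₂ (fun e t =>
          s((⟨FS12.node ι m w ends e t, hkept e t⟩ : {x : W // FS12.kept ι m w x}),
            (⟨FS12.node ι m w ends e (t + 1), hkept e (t + 1)⟩ :
              {x : W // FS12.kept ι m w x}))) he htt
      subst hff
      rw [Fin.ext hii]
  · -- surjectivity
    intro x
    rcases hsurj x with ⟨v, rfl⟩ | ⟨e, a, rfl⟩
    · exact Or.inl ⟨⟨ι v, Or.inl ⟨v, rfl⟩⟩, rfl⟩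
    · by_cases hch : Odd (a : ℕ) ∧ (a : ℕ) + 1 < m e
      · exact Or.inl ⟨⟨w e a, Or.inr ⟨e, a, hch.1, hch.2, rfl⟩⟩, rfl⟩
      · right
        have hna : ¬((a : ℕ) % 2 = 1 ∧ (a : ℕ) + 1 < m e) :=
          fun hh => hch ⟨Nat.odd_iff.mpr hh.1, hh.2⟩
        have halt := a.2
        obtain ⟨t, i0, hti, hit, hsum⟩ : ∃ t i0, t < FS12.kk m e ∧ i0 < FS12.mSeg m e t ∧
            2 * t + i0 = (a : ℕ) := by
          refine ⟨(a : ℕ) / 2, (a : ℕ) % 2, ?_, ?_, by omega⟩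
          · unfold FS12.kk; omega
          · unfold FS12.mSeg FS12.kk; split <;> omega
        obtain ⟨f, he, ht2⟩ := hgetf e t hti
        subst he; subst ht2
        exact ⟨f, ⟨i0, hit⟩, congrArg (w (eF f)) (Fin.ext hsum)⟩
  · -- adjacency
    intro x y
    rw [hadj x y]
    constructor
    · rintro ⟨e, hO⟩
      have hCore : FS12.Core ι m w ends x y := by
        rcases hO with ⟨i, j, hor, hx, hy⟩ | ⟨hpos, hO⟩
        · rcases hor with hor | hor
          · exact FS12.core_step ι m w ends e (i : ℕ) (by have := j.2; omega) x y
              ⟨i.2, by rw [hx]⟩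
              ⟨by have := j.2; omega, by rw [hy]; exact congrArg (w e) (Fin.ext hor)⟩
          · exact FS12.core_symm ι m w ends
              (FS12.core_step ι m w ends e (j : ℕ) (by have := i.2; omega) y x
                ⟨j.2, by rw [hy]⟩
                ⟨by have := i.2; omega, by rw [hx]; exact congrArg (w e) (Fin.ext hor)⟩)
        · rcases hO with ⟨h1, h2⟩ | ⟨h1, h2⟩ | ⟨h1, h2⟩ | ⟨h1, h2⟩
          · exact FS12.core_end1 ι m w ends e x y h1
              ⟨hpos, by rw [h2]⟩
          · exact FS12.core_symm ι m w ends (FS12.core_end1 ι m w ends e y x h1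
              ⟨hpos, by rw [h2]⟩)
          · exact FS12.core_end2 ι m w ends e x y h1
              ⟨by omega, by rw [h2]⟩
          · exact FS12.core_symm ι m w ends (FS12.core_end2 ι m w ends e y x h1
              ⟨by omega, by rw [h2]⟩)
      obtain ⟨e', t, ht, hcl⟩ := hCore
      obtain ⟨f, he, ht2⟩ := hgetf e' t ht
      subst he; subst ht2
      refine ⟨f, ?_⟩
      rcases hcl with ⟨i, j, hi, hj, hor, ⟨h1, hx⟩, ⟨h2, hy⟩⟩ |
        ⟨hx, h2, hy⟩ | ⟨hy, h2, hx⟩ | ⟨hx, h2, hy⟩ | ⟨hy, h2, hx⟩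
      · exact Or.inl ⟨⟨i, hi⟩, ⟨j, hj⟩, hor, hx.symm, hy.symm⟩
      · exact Or.inr ⟨FS12.mSeg_pos m _ _, Or.inl ⟨hx, hy.symm⟩⟩
      · exact Or.inr ⟨FS12.mSeg_pos m _ _, Or.inr (Or.inl ⟨hy, hx.symm⟩)⟩
      · exact Or.inr ⟨FS12.mSeg_pos m _ _, Or.inr (Or.inr (Or.inl ⟨hx, hy.symm⟩))⟩
      · exact Or.inr ⟨FS12.mSeg_pos m _ _, Or.inr (Or.inr (Or.inr ⟨hy, hx.symm⟩))⟩
    · rintro ⟨f, hc⟩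
      rcases hc with ⟨i, j, hor, hx, hy⟩ | ⟨hpos, hc2⟩
      · refine ⟨eF f, Or.inl
          ⟨⟨2 * tF f + (i : ℕ), FS12.idx_lt m (eF f) (tF f) (htF f) i i.2⟩,
           ⟨2 * tF f + (j : ℕ), FS12.idx_lt m (eF f) (tF f) (htF f) j j.2⟩, ?_, hx, hy⟩⟩
        rcases hor with h | h
        · exact Or.inl (show 2 * tF f + (i : ℕ) + 1 = 2 * tF f + (j : ℕ) by omega)
        · exact Or.inr (show 2 * tF f + (j : ℕ) + 1 = 2 * tF f + (i : ℕ) by omega)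
      · have hb0 := FS12.idx_lt m (eF f) (tF f) (htF f) 0 hpos
        have hbl := FS12.idx_lt m (eF f) (tF f) (htF f) _
          (Nat.sub_lt hpos Nat.one_pos)
        have hkb := htF f
        rcases hc2 with ⟨h1, h2⟩ | ⟨h1, h2⟩ | ⟨h1, h2⟩ | ⟨h1, h2⟩
        · -- x = node t, y = w (2t)
          have h1' : x = FS12.node ι m w ends (eF f) (tF f) := h1
          have h2' : y = w (eF f) ⟨2 * tF f + 0, hb0⟩ := h2
          by_cases h0 : tF f = 0
          · refine ⟨eF f, Or.inr ⟨by omega, Or.inl ⟨?_, ?_⟩⟩⟩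
            · rw [h1', h0]; unfold FS12.node; rw [dif_pos rfl]
            · rw [h2']; exact congrArg _ (finmk (by omega))
          · have h2t : 2 * tF f - 1 < m (eF f) := by unfold FS12.kk at hkb; omega
            refine ⟨eF f, Or.inl ⟨⟨2 * tF f - 1, h2t⟩, ⟨2 * tF f + 0, hb0⟩,
              Or.inl (show 2 * tF f - 1 + 1 = 2 * tF f + 0 by omega), ?_, h2'⟩⟩
            rw [h1']; unfold FS12.node; rw [dif_neg h0, dif_pos (htF f)]
        · -- y = node t, x = w (2t)
          have h1' : y = FS12.node ι m w ends (eF f) (tF f) := h1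
          have h2' : x = w (eF f) ⟨2 * tF f + 0, hb0⟩ := h2
          by_cases h0 : tF f = 0
          · refine ⟨eF f, Or.inr ⟨by omega, Or.inr (Or.inl ⟨?_, ?_⟩)⟩⟩
            · rw [h1', h0]; unfold FS12.node; rw [dif_pos rfl]
            · rw [h2']; exact congrArg _ (finmk (by omega))
          · have h2t : 2 * tF f - 1 < m (eF f) := by unfold FS12.kk at hkb; omega
            refine ⟨eF f, Or.inl ⟨⟨2 * tF f + 0, hb0⟩, ⟨2 * tF f - 1, h2t⟩,
              Or.inr (show 2 * tF f - 1 + 1 = 2 * tF f + 0 by omega), h2', ?_⟩⟩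
            rw [h1']; unfold FS12.node; rw [dif_neg h0, dif_pos (htF f)]
        · -- x = node (t+1), y = w (2t + mSeg - 1)
          have h1' : x = FS12.node ι m w ends (eF f) (tF f + 1) := h1
          have h2' : y = w (eF f)
              ⟨2 * tF f + (FS12.mSeg m (eF f) (tF f) - 1), hbl⟩ := h2
          by_cases hk : tF f + 1 = FS12.kk m (eF f)
          · have hms : FS12.mSeg m (eF f) (tF f) = m (eF f) - 2 * tF f := by
              unfold FS12.mSeg; rw [if_pos hk]
            have hkk : FS12.kk m (eF f) = (m (eF f) + 1) / 2 := rfl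
            refine ⟨eF f, Or.inr ⟨by omega, Or.inr (Or.inr (Or.inl ⟨?_, ?_⟩))⟩⟩
            · rw [h1', hk]; unfold FS12.node
              rw [dif_neg (by omega), dif_neg (by omega)]
            · rw [h2']; exact congrArg _ (finmk (by omega))
          · have hms : FS12.mSeg m (eF f) (tF f) = 1 := by
              unfold FS12.mSeg; rw [if_neg hk]
            have h1w : tF f + 1 < FS12.kk m (eF f) := by omega
            have hb3 : 2 * tF f + 1 < m (eF f) := by unfold FS12.kk at h1w; omega
            refine ⟨eF f, Or.inl ⟨⟨2 * tF f + 1, hb3⟩, ⟨2 * tF f + 0, hb0⟩,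
              Or.inr (show 2 * tF f + 0 + 1 = 2 * tF f + 1 by omega), ?_, ?_⟩⟩
            · rw [h1']; unfold FS12.node; rw [dif_neg (by omega), dif_pos h1w]
              exact congrArg _ (finmk (by omega))
            · rw [h2']; exact congrArg _ (finmk (by omega))
        · -- y = node (t+1), x = w (2t + mSeg - 1)
          have h1' : y = FS12.node ι m w ends (eF f) (tF f + 1) := h1
          have h2' : x = w (eF f)
              ⟨2 * tF f + (FS12.mSeg m (eF f) (tF f) - 1), hbl⟩ := h2
          by_cases hk : tF f + 1 = FS12.kk m (eF f)
          · have hms : FS12.mSeg m (eF f) (tF f) = m (eF f) - 2 * tF f := by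
              unfold FS12.mSeg; rw [if_pos hk]
            have hkk : FS12.kk m (eF f) = (m (eF f) + 1) / 2 := rfl
            refine ⟨eF f, Or.inr ⟨by omega, Or.inr (Or.inr (Or.inr ⟨?_, ?_⟩))⟩⟩
            · rw [h1', hk]; unfold FS12.node
              rw [dif_neg (by omega), dif_neg (by omega)]
            · rw [h2']; exact congrArg _ (finmk (by omega))
          · have hms : FS12.mSeg m (eF f) (tF f) = 1 := by
              unfold FS12.mSeg; rw [if_neg hk]
            have h1w : tF f + 1 < FS12.kk m (eF f) := by omega
            have hb3 : 2 * tF f + 1 < m (eF f) := by unfold FS12.kk at h1w; omega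
            refine ⟨eF f, Or.inl ⟨⟨2 * tF f + 0, hb0⟩, ⟨2 * tF f + 1, hb3⟩,
              Or.inl (show 2 * tF f + 0 + 1 = 2 * tF f + 1 by omega), ?_, ?_⟩⟩
            · rw [h2']; exact congrArg _ (finmk (by omega))
            · rw [h1']; unfold FS12.node; rw [dif_neg (by omega), dif_pos h1w]
              exact congrArg _ (finmk (by omega))
end

section
/- For every fixed k, the number of B_k-VPG-graphs on n labeled vertices is at most n^{c·k·n} for some constant c independent of k and n (i.e., log of the number of such graphs is O(n·k·log n)). -/
private lemma segment_prod_of_rect (a b : ℝ × ℝ) (h : a.1 = b.1 ∨ a.2 = b.2) :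
    segment ℝ a b = segment ℝ a.1 b.1 ×ˢ segment ℝ a.2 b.2 := by
  ext ⟨x, y⟩
  simp only [Set.mem_prod]
  constructor
  · rintro ⟨s, t, hs, ht, hst, heq⟩
    rw [Prod.ext_iff] at heq
    exact ⟨⟨s, t, hs, ht, hst, heq.1⟩, ⟨s, t, hs, ht, hst, heq.2⟩⟩
  · rintro ⟨⟨s, t, hs, ht, hst, hx⟩, ⟨s', t', hs', ht', hst', hy⟩⟩
    simp only [smul_eq_mul] at hx hy
    rcases h with h | h
    · refine ⟨s', t', hs', ht', hst', ?_⟩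
      refine Prod.ext ?_ ?_
      · show s' * a.1 + t' * b.1 = x
        rw [← h] at hx ⊢
        linear_combination hx + a.1 * hst' - a.1 * hst
      · show s' * a.2 + t' * b.2 = y
        exact hy
    · refine ⟨s, t, hs, ht, hst, ?_⟩
      refine Prod.ext ?_ ?_
      · show s * a.1 + t * b.1 = x
        exact hx
      · show s * a.2 + t * b.2 = y
        rw [← h] at hy ⊢
        linear_combination hy + a.2 * hst - a.2 * hst'

private lemma uIcc_inter_nonempty (a b c d : ℝ) :
    (Set.uIcc a b ∩ Set.uIcc c d).Nonempty ↔ min a b ≤ max c d ∧ min c d ≤ max a b := by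
  simp only [Set.uIcc, Set.Icc_inter_Icc, Set.nonempty_Icc, sup_le_iff, le_inf_iff]
  have h1 : min a b ≤ max a b := min_le_max
  have h2 : min c d ≤ max c d := min_le_max
  tauto

private lemma rect_seg_inter (a b c d : ℝ × ℝ) (hab : a.1 = b.1 ∨ a.2 = b.2)
    (hcd : c.1 = d.1 ∨ c.2 = d.2) :
    (segment ℝ a b ∩ segment ℝ c d).Nonempty ↔
      ((min a.1 b.1 ≤ max c.1 d.1 ∧ min c.1 d.1 ≤ max a.1 b.1) ∧
       (min a.2 b.2 ≤ max c.2 d.2 ∧ min c.2 d.2 ≤ max a.2 b.2)) := by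
  rw [segment_prod_of_rect a b hab, segment_prod_of_rect c d hcd, Set.prod_inter_prod,
    Set.prod_nonempty_iff, segment_eq_uIcc, segment_eq_uIcc, segment_eq_uIcc, segment_eq_uIcc,
    uIcc_inter_nonempty, uIcc_inter_nonempty]

private lemma bendPath_inter_iff (k : ℕ) (p q : ℕ → ℝ × ℝ)
    (hp : IsRectilinear k p) (hq : IsRectilinear k q) :
    (BendPathSet k p ∩ BendPathSet k q).Nonempty ↔
    ∃ i < k + 1, ∃ j < k + 1,
      ((min (p i).1 (p (i+1)).1 ≤ max (q j).1 (q (j+1)).1 ∧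
        min (q j).1 (q (j+1)).1 ≤ max (p i).1 (p (i+1)).1) ∧
       (min (p i).2 (p (i+1)).2 ≤ max (q j).2 (q (j+1)).2 ∧
        min (q j).2 (q (j+1)).2 ≤ max (p i).2 (p (i+1)).2)) := by
  constructor
  · rintro ⟨x, hx1, hx2⟩
    simp only [BendPathSet, Set.mem_iUnion, Finset.mem_range] at hx1 hx2
    obtain ⟨i, hi, hxi⟩ := hx1
    obtain ⟨j, hj, hxj⟩ := hx2
    exact ⟨i, hi, j, hj, (rect_seg_inter _ _ _ _ (hp i hi) (hq j hj)).mp ⟨x, hxi, hxj⟩⟩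
  · rintro ⟨i, hi, j, hj, hcond⟩
    obtain ⟨x, hx1, hx2⟩ := (rect_seg_inter _ _ _ _ (hp i hi) (hq j hj)).mpr hcond
    refine ⟨x, ?_, ?_⟩ <;>
      simp only [BendPathSet, Set.mem_iUnion, Finset.mem_range]
    · exact ⟨i, hi, hx1⟩
    · exact ⟨j, hj, hx2⟩

/-- rank of `i` among the values of `f`. -/
private noncomputable def rnk {ι : Type*} [Fintype ι] (f : ι → ℝ) (i : ι) : ℕ :=
  (Finset.univ.filter (fun a => f a < f i)).card

private lemma rnk_le_rnk_iff {ι : Type*} [Fintype ι] (f : ι → ℝ) (i j : ι) :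
    rnk f i ≤ rnk f j ↔ f i ≤ f j := by
  constructor
  · intro h
    by_contra hc
    push_neg at hc
    have hss : Finset.univ.filter (fun a => f a < f j) ⊂
        Finset.univ.filter (fun a => f a < f i) := by
      refine (Finset.ssubset_iff_of_subset ?_).mpr ?_
      · intro a ha
        simp only [Finset.mem_filter, Finset.mem_univ, true_and] at ha ⊢
        exact ha.trans hc
      · exact ⟨j, by simp [hc], by simp⟩
    have := Finset.card_lt_card hss
    simp only [rnk] at h
    omega
  · intro h
    refine Finset.card_le_card ?_
    intro a ha
    simp only [Finset.mem_filter, Finset.mem_univ, true_and] at ha ⊢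
    exact lt_of_lt_of_le ha h

private lemma minmax_transfer {α : Type*} (f g : α → ℝ)
    (H : ∀ a b, f a ≤ f b ↔ g a ≤ g b) (a b c d : α) :
    (min (f a) (f b) ≤ max (f c) (f d)) ↔ (min (g a) (g b) ≤ max (g c) (g d)) := by
  simp only [min_le_iff, le_max_iff, H]

private lemma graphs_eq (k n : ℕ) (G₁ G₂ : SimpleGraph (Fin n))
    (p q : Fin n → ℕ → ℝ × ℝ)
    (hp : ∀ v, IsRectilinear k (p v)) (hq : ∀ v, IsRectilinear k (q v))
    (hGp : ∀ u v, u ≠ v → (G₁.Adj u v ↔ (BendPathSet k (p u) ∩ BendPathSet k (p v)).Nonempty))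
    (hGq : ∀ u v, u ≠ v → (G₂.Adj u v ↔ (BendPathSet k (q u) ∩ BendPathSet k (q v)).Nonempty))
    (hX : rnk (fun a : Fin n × Fin (k+2) => (p a.1 a.2).1)
        = rnk (fun a : Fin n × Fin (k+2) => (q a.1 a.2).1))
    (hY : rnk (fun a : Fin n × Fin (k+2) => (p a.1 a.2).2)
        = rnk (fun a : Fin n × Fin (k+2) => (q a.1 a.2).2)) :
    G₁ = G₂ := by
  have HX : ∀ a b : Fin n × Fin (k+2),
      (p a.1 a.2).1 ≤ (p b.1 b.2).1 ↔ (q a.1 a.2).1 ≤ (q b.1 b.2).1 := by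
    intro a b
    rw [← rnk_le_rnk_iff (fun a : Fin n × Fin (k+2) => (p a.1 a.2).1),
      ← rnk_le_rnk_iff (fun a : Fin n × Fin (k+2) => (q a.1 a.2).1), hX]
  have HY : ∀ a b : Fin n × Fin (k+2),
      (p a.1 a.2).2 ≤ (p b.1 b.2).2 ↔ (q a.1 a.2).2 ≤ (q b.1 b.2).2 := by
    intro a b
    rw [← rnk_le_rnk_iff (fun a : Fin n × Fin (k+2) => (p a.1 a.2).2),
      ← rnk_le_rnk_iff (fun a : Fin n × Fin (k+2) => (q a.1 a.2).2), hY]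
  ext u v
  by_cases huv : u = v
  · subst huv; simp
  · rw [hGp u v huv, hGq u v huv, bendPath_inter_iff _ _ _ (hp u) (hp v),
      bendPath_inter_iff _ _ _ (hq u) (hq v)]
    refine exists_congr fun i => and_congr_right fun hi =>
      exists_congr fun j => and_congr_right fun hj => ?_
    have hik : i < k + 2 := by omega
    have hik' : i + 1 < k + 2 := by omega
    have hjk : j < k + 2 := by omega
    have hjk' : j + 1 < k + 2 := by omega
    have e1 := minmax_transfer _ _ HX (u, ⟨i, hik⟩) (u, ⟨i+1, hik'⟩) (v, ⟨j, hjk⟩) (v, ⟨j+1, hjk'⟩)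
    have e2 := minmax_transfer _ _ HX (v, ⟨j, hjk⟩) (v, ⟨j+1, hjk'⟩) (u, ⟨i, hik⟩) (u, ⟨i+1, hik'⟩)
    have e3 := minmax_transfer _ _ HY (u, ⟨i, hik⟩) (u, ⟨i+1, hik'⟩) (v, ⟨j, hjk⟩) (v, ⟨j+1, hjk'⟩)
    have e4 := minmax_transfer _ _ HY (v, ⟨j, hjk⟩) (v, ⟨j+1, hjk'⟩) (u, ⟨i, hik⟩) (u, ⟨i+1, hik'⟩)
    exact and_congr (and_congr e1 e2) (and_congr e3 e4)

/-- There is a constant `c`, independent of `k` and `n`, such that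
for every `k ≥ 1` the number of `B_k`-VPG-graphs on `n` labeled vertices is at most
`n ^ (c * k * n)` (i.e. its logarithm is `O(n k log n)`). -/
theorem count_BkVPG_graphs_le : ∃ c : ℕ, ∀ k n : ℕ, 1 ≤ k →
    {G : SimpleGraph (Fin n) | IsBkVPG k G}.ncard ≤ n ^ (c * k * n) := by
  classical
  refine ⟨24, fun k n hk => ?_⟩
  by_cases hn : n ≤ 1
  · have hsub : Subsingleton (SimpleGraph (Fin n)) := by
      constructor
      intro G₁ G₂
      ext u v
      have huv : u = v := by
        have h1 := u.isLt
        have h2 := v.isLt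
        exact Fin.ext (by omega)
      simp [huv]
    have h1 : {G : SimpleGraph (Fin n) | IsBkVPG k G}.ncard ≤ 1 := calc
      {G : SimpleGraph (Fin n) | IsBkVPG k G}.ncard
          ≤ (Set.univ : Set (SimpleGraph (Fin n))).ncard :=
        Set.ncard_le_ncard (Set.subset_univ _) Set.finite_univ
      _ = Fintype.card (SimpleGraph (Fin n)) := by
        rw [Set.ncard_univ, Nat.card_eq_fintype_card]
      _ ≤ 1 := Fintype.card_le_one_iff_subsingleton.mpr hsub
    refine h1.trans ?_
    interval_cases n <;> simp
  · push_neg at hn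
    by_cases hkn : k ≤ n
    · -- encoding via coordinate ranks
      set ι := (Fin n × Fin (k+2)) with hι
      have hcardι : Fintype.card ι = n * (k+2) := by
        simp [hι]
      set M := n * (k+2) with hM
      have hbound : ∀ (f : ι → ℝ) (a : ι), rnk f a < M + 1 := by
        intro f a
        have : rnk f a ≤ Fintype.card ι :=
          (Finset.card_filter_le _ _).trans (le_of_eq (Finset.card_univ))
        omega
      let enc : SimpleGraph (Fin n) → ((ι → Fin (M+1)) × (ι → Fin (M+1))) := fun G =>
        if h : IsBkVPG k G then
          (fun a => ⟨rnk (fun b : ι => (h.choose b.1 b.2).1) a, hbound _ a⟩,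
           fun a => ⟨rnk (fun b : ι => (h.choose b.1 b.2).2) a, hbound _ a⟩)
        else default
      have hinj : Set.InjOn enc {G : SimpleGraph (Fin n) | IsBkVPG k G} := by
        intro G₁ h₁ G₂ h₂ hEq
        simp only [Set.mem_setOf_eq] at h₁ h₂
        simp only [enc, dif_pos h₁, dif_pos h₂, Prod.mk.injEq] at hEq
        obtain ⟨hp₁, hGp₁⟩ := h₁.choose_spec
        obtain ⟨hp₂, hGp₂⟩ := h₂.choose_spec
        refine graphs_eq k n G₁ G₂ h₁.choose h₂.choose hp₁ hp₂ hGp₁ hGp₂ ?_ ?_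
        · funext a
          exact congrArg Fin.val (congrFun hEq.1 a)
        · funext a
          exact congrArg Fin.val (congrFun hEq.2 a)
      have hcount : {G : SimpleGraph (Fin n) | IsBkVPG k G}.ncard
          ≤ (M+1) ^ (2 * (n * (k+2))) := calc
        {G : SimpleGraph (Fin n) | IsBkVPG k G}.ncard
            = (enc '' {G : SimpleGraph (Fin n) | IsBkVPG k G}).ncard :=
          (Set.ncard_image_of_injOn hinj).symm
        _ ≤ (Set.univ : Set ((ι → Fin (M+1)) × (ι → Fin (M+1)))).ncard :=
          Set.ncard_le_ncard (Set.subset_univ _) Set.finite_univ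
        _ = Fintype.card ((ι → Fin (M+1)) × (ι → Fin (M+1))) := by
          rw [Set.ncard_univ, Nat.card_eq_fintype_card]
        _ = (M+1) ^ (2 * (n * (k+2))) := by
          rw [Fintype.card_prod, Fintype.card_fun, Fintype.card_fin, hcardι, ← pow_add, hM]
          ring_nf
      refine hcount.trans ?_
      have hMle : M + 1 ≤ n ^ 4 := by
        have hk2 : k + 2 ≤ 2 * n := by omega
        have h1 : M + 1 ≤ 2 * n * n + 1 := by
          simp only [hM]
          nlinarith
        have hnn : 2 * 2 ≤ n * n := Nat.mul_le_mul hn hn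
        have h2 : 2 * n * n + 1 ≤ n ^ 4 := by nlinarith [hnn, sq_nonneg n]
        omega
      have hexp : 2 * (n * (k+2)) ≤ 6 * (k * n) := by nlinarith
      calc (M+1) ^ (2 * (n * (k+2)))
          ≤ (n ^ 4) ^ (2 * (n * (k+2))) := Nat.pow_le_pow_left hMle _
        _ ≤ (n ^ 4) ^ (6 * (k * n)) := Nat.pow_le_pow_right (by positivity) hexp
        _ = n ^ (24 * k * n) := by rw [← pow_mul]; ring_nf
    · -- k > n : trivial bound by the total number of graphs
      push_neg at hkn
      have hinj : Function.Injective
          (fun (G : SimpleGraph (Fin n)) (u v : Fin n) => decide (G.Adj u v)) := by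
        intro G₁ G₂ hEq
        ext u v
        have := congrFun (congrFun hEq u) v
        simpa [decide_eq_decide] using this
      have hcount : {G : SimpleGraph (Fin n) | IsBkVPG k G}.ncard ≤ 2 ^ (n * n) := calc
        {G : SimpleGraph (Fin n) | IsBkVPG k G}.ncard
            ≤ (Set.univ : Set (SimpleGraph (Fin n))).ncard :=
          Set.ncard_le_ncard (Set.subset_univ _) Set.finite_univ
        _ = Fintype.card (SimpleGraph (Fin n)) := by
          rw [Set.ncard_univ, Nat.card_eq_fintype_card]
        _ ≤ Fintype.card (Fin n → Fin n → Bool) := Fintype.card_le_of_injective _ hinj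
        _ = 2 ^ (n * n) := by
          rw [Fintype.card_fun, Fintype.card_fun, Fintype.card_fin, Fintype.card_bool, ← pow_mul]
      refine hcount.trans ?_
      calc (2 : ℕ) ^ (n * n) ≤ n ^ (n * n) := Nat.pow_le_pow_left hn _
        _ ≤ n ^ (24 * k * n) := Nat.pow_le_pow_right (by omega) (by nlinarith)
end

section
/- For every k there exists a cocomparability graph that is not a B_k-VPG-graph; in particular, no B_k-VPG class contains all cocomparability graphs. -/
/-- The cocomparability graph of a partial order: two distinct elements are adjacent
iff they are incomparable. -/
def cocompGraph {α : Type*} (P : PartialOrder α) : SimpleGraph α :=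
  SimpleGraph.fromRel (fun a b => ¬ P.le a b ∧ ¬ P.le b a)

/-- The partial order `P` has dimension at most `t`: its order relation is the
intersection of `t` linear orders on the ground set. -/
def HasDimAtMost {α : Type*} (P : PartialOrder α) (t : ℕ) : Prop :=
  ∃ r : Fin t → α → α → Prop, (∀ i, IsLinearOrder α (r i)) ∧
    ∀ a b : α, P.le a b ↔ ∀ i, r i a b

open Set


lemma combo_bounds (x y u v : ℝ) (hu : 0 ≤ u) (hv : 0 ≤ v) (huv : u + v = 1) :
    min x y ≤ u * x + v * y ∧ u * x + v * y ≤ max x y := by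
  rcases le_total x y with h | h
  · rw [min_eq_left h, max_eq_right h]
    have e1 : u * x + v * x = x := by rw [← add_mul, huv, one_mul]
    have e2 : u * y + v * y = y := by rw [← add_mul, huv, one_mul]
    have t1 := mul_le_mul_of_nonneg_left h hv
    have t2 := mul_le_mul_of_nonneg_left h hu
    constructor <;> linarith
  · rw [min_eq_right h, max_eq_left h]
    have e1 : u * x + v * x = x := by rw [← add_mul, huv, one_mul]
    have e2 : u * y + v * y = y := by rw [← add_mul, huv, one_mul]
    have t1 := mul_le_mul_of_nonneg_left h hv
    have t2 := mul_le_mul_of_nonneg_left h hu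
    constructor <;> linarith

lemma seg_box (a b : ℝ × ℝ) (h : a.1 = b.1 ∨ a.2 = b.2) :
    segment ℝ a b = Set.Icc (min a.1 b.1) (max a.1 b.1) ×ˢ Set.Icc (min a.2 b.2) (max a.2 b.2) := by
  ext x
  constructor
  · rintro ⟨u, v, hu, hv, huv, rfl⟩
    simp only [Set.mem_prod, Set.mem_Icc, Prod.fst_add, Prod.snd_add, Prod.smul_fst,
      Prod.smul_snd, smul_eq_mul]
    refine ⟨⟨?_, ?_⟩, ?_, ?_⟩
    · exact (combo_bounds a.1 b.1 u v hu hv huv).1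
    · exact (combo_bounds a.1 b.1 u v hu hv huv).2
    · exact (combo_bounds a.2 b.2 u v hu hv huv).1
    · exact (combo_bounds a.2 b.2 u v hu hv huv).2
  · rintro ⟨hx1, hx2⟩
    rcases h with h | h
    · have hx1' : x.1 = a.1 :=
        le_antisymm (by simpa [← h] using hx1.2) (by simpa [← h] using hx1.1)
      have : x.2 ∈ segment ℝ a.2 b.2 := by
        rw [segment_eq_Icc' a.2 b.2]; exact hx2
      obtain ⟨u, v, hu, hv, huv, hx⟩ := this
      refine ⟨u, v, hu, hv, huv, ?_⟩
      have h1 : u * a.1 + v * b.1 = a.1 := by rw [← h, ← add_mul, huv, one_mul]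
      have : u • a + v • b = (u * a.1 + v * b.1, u * a.2 + v * b.2) := by
        simp [Prod.ext_iff]
      rw [this, Prod.ext_iff]
      exact ⟨by simpa using h1.trans hx1'.symm, by simpa using hx⟩
    · have hx2' : x.2 = a.2 :=
        le_antisymm (by simpa [← h] using hx2.2) (by simpa [← h] using hx2.1)
      have : x.1 ∈ segment ℝ a.1 b.1 := by
        rw [segment_eq_Icc' a.1 b.1]; exact hx1
      obtain ⟨u, v, hu, hv, huv, hx⟩ := this
      refine ⟨u, v, hu, hv, huv, ?_⟩
      have h2 : u * a.2 + v * b.2 = a.2 := by rw [← h, ← add_mul, huv, one_mul]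
      have : u • a + v • b = (u * a.1 + v * b.1, u * a.2 + v * b.2) := by
        simp [Prod.ext_iff]
      rw [this, Prod.ext_iff]
      exact ⟨by simpa using hx, by simpa using h2.trans hx2'.symm⟩

lemma seg_inter_iff (a b c d : ℝ × ℝ) (hab : a.1 = b.1 ∨ a.2 = b.2)
    (hcd : c.1 = d.1 ∨ c.2 = d.2) :
    (segment ℝ a b ∩ segment ℝ c d).Nonempty ↔
      (max (min a.1 b.1) (min c.1 d.1) ≤ min (max a.1 b.1) (max c.1 d.1)) ∧
      (max (min a.2 b.2) (min c.2 d.2) ≤ min (max a.2 b.2) (max c.2 d.2)) := by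
  rw [seg_box a b hab, seg_box c d hcd, Set.prod_inter_prod, Set.prod_nonempty_iff,
    Set.Icc_inter_Icc, Set.Icc_inter_Icc, Set.nonempty_Icc, Set.nonempty_Icc]

lemma bend_inter_iff (k : ℕ) (p q : ℕ → ℝ × ℝ) :
    (BendPathSet k p ∩ BendPathSet k q).Nonempty ↔
      ∃ i < k + 1, ∃ j < k + 1,
        (segment ℝ (p i) (p (i + 1)) ∩ segment ℝ (q j) (q (j + 1))).Nonempty := by
  simp only [BendPathSet, Set.Nonempty, Set.mem_inter_iff, Set.mem_iUnion,
    Finset.mem_range, exists_prop]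
  constructor
  · rintro ⟨x, ⟨i, hi, hxi⟩, ⟨j, hj, hxj⟩⟩
    exact ⟨i, hi, j, hj, x, hxi, hxj⟩
  · rintro ⟨i, hi, j, hj, x, hxi, hxj⟩
    exact ⟨x, ⟨i, hi, hxi⟩, ⟨j, hj, hxj⟩⟩

noncomputable def realizeRep (k n N : ℕ) (r : Fin n → Fin (k + 2) → Fin N × Fin N)
    (v : Fin n) (j : ℕ) : ℝ × ℝ :=
  ((((r v ⟨min j (k + 1), by omega⟩).1 : ℕ) : ℝ), (((r v ⟨min j (k + 1), by omega⟩).2 : ℕ) : ℝ))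

noncomputable def gGraph (k n N : ℕ) (r : Fin n → Fin (k + 2) → Fin N × Fin N) :
    SimpleGraph (Fin n) :=
  SimpleGraph.fromRel (fun u v =>
    (BendPathSet k (realizeRep k n N r u) ∩ BendPathSet k (realizeRep k n N r v)).Nonempty)

open Finset in
lemma rank_lemma (S : Finset ℝ) :
    ∃ f : ℝ → ℕ, (∀ x ∈ S, f x < S.card) ∧ (∀ x ∈ S, ∀ y ∈ S, (x ≤ y ↔ f x ≤ f y)) := by
  classical
  refine ⟨fun x => (S.filter (fun y => y < x)).card, ?_, ?_⟩
  · intro x hx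
    apply Finset.card_lt_card
    constructor
    · exact Finset.filter_subset _ _
    · intro hsub
      have := hsub hx
      simp at this
  · intro x hx y hy
    constructor
    · intro hxy
      exact Finset.card_le_card (by
        intro z hz
        simp only [Finset.mem_filter] at hz ⊢
        exact ⟨hz.1, lt_of_lt_of_le hz.2 hxy⟩)
    · intro hcard
      by_contra hxy
      push_neg at hxy
      have hss : S.filter (fun z => z < y) ⊂ S.filter (fun z => z < x) := by
        constructor
        · intro z hz
          simp only [Finset.mem_filter] at hz ⊢
          exact ⟨hz.1, hz.2.trans hxy⟩
        · intro hsub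
          have := hsub (by simp only [Finset.mem_filter]; exact ⟨hy, hxy⟩)
          simp at this
      exact absurd hcard (by simpa using Finset.card_lt_card hss)

lemma cond_transfer (S : Finset ℝ) (f : ℝ → ℕ)
    (hf : ∀ x ∈ S, ∀ y ∈ S, (x ≤ y ↔ f x ≤ f y))
    (x1 x2 x3 x4 : ℝ) (h1 : x1 ∈ S) (h2 : x2 ∈ S) (h3 : x3 ∈ S) (h4 : x4 ∈ S) :
    (max (min x1 x2) (min x3 x4) ≤ min (max x1 x2) (max x3 x4)) ↔
      (max (min ((f x1 : ℕ) : ℝ) ((f x2 : ℕ) : ℝ)) (min ((f x3 : ℕ) : ℝ) ((f x4 : ℕ) : ℝ)) ≤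
       min (max ((f x1 : ℕ) : ℝ) ((f x2 : ℕ) : ℝ)) (max ((f x3 : ℕ) : ℝ) ((f x4 : ℕ) : ℝ))) := by
  have memmin : ∀ x ∈ S, ∀ y ∈ S, min x y ∈ S := by
    intro x hx y hy; rcases le_total x y with h | h
    · rwa [min_eq_left h]
    · rwa [min_eq_right h]
  have memmax : ∀ x ∈ S, ∀ y ∈ S, max x y ∈ S := by
    intro x hx y hy; rcases le_total x y with h | h
    · rwa [max_eq_right h]
    · rwa [max_eq_left h]
  have fmin : ∀ x ∈ S, ∀ y ∈ S, f (min x y) = min (f x) (f y) := by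
    intro x hx y hy; rcases le_total x y with h | h
    · rw [min_eq_left h, min_eq_left ((hf x hx y hy).1 h)]
    · rw [min_eq_right h, min_eq_right ((hf y hy x hx).1 h)]
  have fmax : ∀ x ∈ S, ∀ y ∈ S, f (max x y) = max (f x) (f y) := by
    intro x hx y hy; rcases le_total x y with h | h
    · rw [max_eq_right h, max_eq_right ((hf x hx y hy).1 h)]
    · rw [max_eq_left h, max_eq_left ((hf y hy x hx).1 h)]
  rw [← Nat.cast_min, ← Nat.cast_min, ← Nat.cast_max, ← Nat.cast_max,
    ← Nat.cast_max, ← Nat.cast_min, Nat.cast_le,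
    ← fmin x1 h1 x2 h2, ← fmin x3 h3 x4 h4, ← fmax x1 h1 x2 h2, ← fmax x3 h3 x4 h4,
    ← fmax _ (memmin x1 h1 x2 h2) _ (memmin x3 h3 x4 h4),
    ← fmin _ (memmax x1 h1 x2 h2) _ (memmax x3 h3 x4 h4)]
  exact hf _ (memmax _ (memmin x1 h1 x2 h2) _ (memmin x3 h3 x4 h4))
    _ (memmin _ (memmax x1 h1 x2 h2) _ (memmax x3 h3 x4 h4))



lemma discretize (k n : ℕ) (G : SimpleGraph (Fin n)) (h : IsBkVPG k G) :
    ∃ r : Fin n → Fin (k + 2) → Fin (n * (k + 2)) × Fin (n * (k + 2)),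
      gGraph k n (n * (k + 2)) r = G := by
  classical
  obtain ⟨p, hrect, hadj⟩ := h
  set N := n * (k + 2) with hN
  set Xs : Finset ℝ :=
    Finset.image (fun vi : Fin n × Fin (k + 2) => (p vi.1 (vi.2 : ℕ)).1) Finset.univ with hXs
  set Ys : Finset ℝ :=
    Finset.image (fun vi : Fin n × Fin (k + 2) => (p vi.1 (vi.2 : ℕ)).2) Finset.univ with hYs
  obtain ⟨fX, hfXlt, hfX⟩ := rank_lemma Xs
  obtain ⟨fY, hfYlt, hfY⟩ := rank_lemma Ys
  have hXcard : Xs.card ≤ N := by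
    calc Xs.card ≤ (Finset.univ : Finset (Fin n × Fin (k + 2))).card := Finset.card_image_le
    _ = N := by simp [hN]
  have hYcard : Ys.card ≤ N := by
    calc Ys.card ≤ (Finset.univ : Finset (Fin n × Fin (k + 2))).card := Finset.card_image_le
    _ = N := by simp [hN]
  have hmemX : ∀ (v : Fin n) (i : ℕ), i < k + 2 → (p v i).1 ∈ Xs := by
    intro v i hi
    exact Finset.mem_image.2 ⟨(v, ⟨i, hi⟩), Finset.mem_univ _, rfl⟩
  have hmemY : ∀ (v : Fin n) (i : ℕ), i < k + 2 → (p v i).2 ∈ Ys := by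
    intro v i hi
    exact Finset.mem_image.2 ⟨(v, ⟨i, hi⟩), Finset.mem_univ _, rfl⟩
  refine ⟨fun v i => (⟨fX (p v (i : ℕ)).1, lt_of_lt_of_le (hfXlt _ (hmemX v i i.2)) hXcard⟩,
    ⟨fY (p v (i : ℕ)).2, lt_of_lt_of_le (hfYlt _ (hmemY v i i.2)) hYcard⟩), ?_⟩
  set r : Fin n → Fin (k + 2) → Fin N × Fin N := fun v i =>
    (⟨fX (p v (i : ℕ)).1, lt_of_lt_of_le (hfXlt _ (hmemX v i i.2)) hXcard⟩,
     ⟨fY (p v (i : ℕ)).2, lt_of_lt_of_le (hfYlt _ (hmemY v i i.2)) hYcard⟩) with hr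
  set q := realizeRep k n N r with hqdef
  have hq : ∀ (v : Fin n) (j : ℕ), j ≤ k + 1 →
      q v j = ((fX (p v j).1 : ℝ), (fY (p v j).2 : ℝ)) := by
    intro v j hj
    have e : (⟨min j (k + 1), by omega⟩ : Fin (k + 2)) = ⟨j, by omega⟩ :=
      Fin.ext (min_eq_left hj)
    simp only [hqdef, realizeRep, e, hr, min_eq_left hj]
  have key : ∀ (u v : Fin n) (i j : ℕ), i < k + 1 → j < k + 1 →
      ((segment ℝ (q u i) (q u (i + 1)) ∩ segment ℝ (q v j) (q v (j + 1))).Nonempty ↔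
       (segment ℝ (p u i) (p u (i + 1)) ∩ segment ℝ (p v j) (p v (j + 1))).Nonempty) := by
    intro u v i j hi hj
    have hiu : i ≤ k + 1 := by omega
    have hiu' : i + 1 ≤ k + 1 := by omega
    have hjv : j ≤ k + 1 := by omega
    have hjv' : j + 1 ≤ k + 1 := by omega
    have habp : (p u i).1 = (p u (i + 1)).1 ∨ (p u i).2 = (p u (i + 1)).2 := hrect u i hi
    have hcdp : (p v j).1 = (p v (j + 1)).1 ∨ (p v j).2 = (p v (j + 1)).2 := hrect v j hj
    have habq : (q u i).1 = (q u (i + 1)).1 ∨ (q u i).2 = (q u (i + 1)).2 := by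
      rw [hq u i hiu, hq u (i + 1) hiu']
      rcases habp with h | h
      · exact Or.inl (by simp [h])
      · exact Or.inr (by simp [h])
    have hcdq : (q v j).1 = (q v (j + 1)).1 ∨ (q v j).2 = (q v (j + 1)).2 := by
      rw [hq v j hjv, hq v (j + 1) hjv']
      rcases hcdp with h | h
      · exact Or.inl (by simp [h])
      · exact Or.inr (by simp [h])
    rw [seg_inter_iff _ _ _ _ habq hcdq, seg_inter_iff _ _ _ _ habp hcdp,
      hq u i hiu, hq u (i + 1) hiu', hq v j hjv, hq v (j + 1) hjv']
    have m1 : (p u i).1 ∈ Xs := hmemX u i (by omega)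
    have m2 : (p u (i + 1)).1 ∈ Xs := hmemX u (i + 1) (by omega)
    have m3 : (p v j).1 ∈ Xs := hmemX v j (by omega)
    have m4 : (p v (j + 1)).1 ∈ Xs := hmemX v (j + 1) (by omega)
    have n1 : (p u i).2 ∈ Ys := hmemY u i (by omega)
    have n2 : (p u (i + 1)).2 ∈ Ys := hmemY u (i + 1) (by omega)
    have n3 : (p v j).2 ∈ Ys := hmemY v j (by omega)
    have n4 : (p v (j + 1)).2 ∈ Ys := hmemY v (j + 1) (by omega)
    exact and_congr (cond_transfer Xs fX hfX _ _ _ _ m1 m2 m3 m4).symm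
      (cond_transfer Ys fY hfY _ _ _ _ n1 n2 n3 n4).symm
  have main : ∀ u v : Fin n,
      ((BendPathSet k (q u) ∩ BendPathSet k (q v)).Nonempty ↔
       (BendPathSet k (p u) ∩ BendPathSet k (p v)).Nonempty) := by
    intro u v
    rw [bend_inter_iff, bend_inter_iff]
    exact exists_congr fun i => and_congr_right fun hi =>
      exists_congr fun j => and_congr_right fun hj => key u v i j hi hj
  ext u v
  by_cases huv : u = v
  · subst huv
    simp [gGraph]
  · simp only [gGraph, SimpleGraph.fromRel_adj]
    constructor
    · rintro ⟨-, h | h⟩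
      · exact (hadj u v huv).2 ((main u v).1 h)
      · rw [Set.inter_comm] at h
        exact (hadj u v huv).2 ((main u v).1 h)
    · intro hG
      exact ⟨huv, Or.inl ((main u v).2 ((hadj u v huv).1 hG))⟩



def pRel (m : ℕ) (E : Fin m → Fin m → Bool) (a b : Fin (2 * m)) : Prop :=
  a = b ∨ ∃ (h₁ : a.1 < m) (h₂ : m ≤ b.1),
    E ⟨a.1, h₁⟩ ⟨b.1 - m, by have := b.2; omega⟩ = true

def pOrd (m : ℕ) (E : Fin m → Fin m → Bool) : PartialOrder (Fin (2 * m)) where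
  le := pRel m E
  lt a b := pRel m E a b ∧ ¬ pRel m E b a
  lt_iff_le_not_ge _ _ := Iff.rfl
  le_refl a := Or.inl rfl
  le_trans a b c hab hbc := by
    rcases hab with rfl | ⟨h1, h2, h3⟩
    · exact hbc
    · rcases hbc with rfl | ⟨h1', h2', _⟩
      · exact Or.inr ⟨h1, h2, h3⟩
      · omega
  le_antisymm a b hab hba := by
    rcases hab with rfl | ⟨h1, h2, _⟩
    · rfl
    · rcases hba with rfl | ⟨h1', h2', _⟩
      · rfl
      · omega

lemma pOrd_adj (m : ℕ) (E : Fin m → Fin m → Bool) (i j : Fin m) :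
    (cocompGraph (pOrd m E)).Adj ⟨i.1, by omega⟩ ⟨m + j.1, by omega⟩ ↔ ¬ (E i j = true) := by
  have hne : (⟨i.1, by omega⟩ : Fin (2 * m)) ≠ ⟨m + j.1, by omega⟩ := by
    intro h
    have := congrArg Fin.val h
    simp only at this
    omega
  have hLba : ¬ (pOrd m E).le ⟨m + j.1, by omega⟩ ⟨i.1, by omega⟩ := by
    rintro (h | ⟨h1, h2, h3⟩)
    · exact hne h.symm
    · simp only at h1 h2
      omega
  have hLab : (pOrd m E).le ⟨i.1, by omega⟩ ⟨m + j.1, by omega⟩ ↔ E i j = true := by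
    constructor
    · rintro (h | ⟨h1, h2, h3⟩)
      · exact absurd h hne
      · have e1 : (⟨(⟨i.1, by omega⟩ : Fin (2 * m)).1, h1⟩ : Fin m) = i := Fin.ext rfl
        have e2 : (⟨(⟨m + j.1, by omega⟩ : Fin (2 * m)).1 - m, by omega⟩ : Fin m) = j :=
          Fin.ext (by show m + j.1 - m = j.1; omega)
        rwa [e1, e2] at h3
    · intro hE
      refine Or.inr ⟨by simp [i.2], by simp, ?_⟩
      have e1 : (⟨(⟨i.1, by omega⟩ : Fin (2 * m)).1, by simp [i.2]⟩ : Fin m) = i := Fin.ext rfl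
      have e2 : (⟨(⟨m + j.1, by omega⟩ : Fin (2 * m)).1 - m, by have := j.2; omega⟩ : Fin m) = j :=
        Fin.ext (by show m + j.1 - m = j.1; omega)
      rw [show ((⟨(⟨m + j.1, by omega⟩ : Fin (2*m)).1 - m, _⟩ : Fin m)) = j from e2]
      rw [show ((⟨(⟨i.1, by omega⟩ : Fin (2*m)).1, _⟩ : Fin m)) = i from e1]
      exact hE
  rw [cocompGraph, SimpleGraph.fromRel_adj]
  constructor
  · rintro ⟨-, ⟨h, -⟩ | ⟨-, h⟩⟩ <;> exact fun hE => h (hLab.2 hE)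
  · intro h
    exact ⟨hne, Or.inl ⟨fun hle => h (hLab.1 hle), hLba⟩⟩

lemma pOrd_inj (m : ℕ) : Function.Injective (fun E : Fin m → Fin m → Bool => cocompGraph (pOrd m E)) := by
  intro E1 E2 hEq
  funext i j
  have h1 := pOrd_adj m E1 i j
  have h2 := pOrd_adj m E2 i j
  have hEq' : cocompGraph (pOrd m E1) = cocompGraph (pOrd m E2) := hEq
  rw [hEq'] at h1
  rw [h1] at h2
  rcases Bool.eq_false_or_eq_true (E1 i j) with h | h <;>
    rcases Bool.eq_false_or_eq_true (E2 i j) with h' | h' <;> simp [h, h'] at h2 ⊢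


lemma numeric_bound (K : ℕ) (hK : 2 ≤ K) :
    ((2 * 2 ^ (9 * K + 3) * K) * (2 * 2 ^ (9 * K + 3) * K)) ^ (K * (2 * 2 ^ (9 * K + 3))) <
      2 ^ (2 ^ (9 * K + 3) * 2 ^ (9 * K + 3)) := by
  set s := 9 * K + 3 with hs
  set m := 2 ^ s with hm
  set N := 2 * m * K with hN
  set L := Nat.log 2 N + 1 with hLdef
  have hNL : N < 2 ^ L := Nat.lt_pow_succ_log_self (by norm_num) N
  have hL : L ≤ s + K + 2 := by
    have h1 : N ≤ 2 ^ (s + 1 + K) := by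
      have hKle : K ≤ 2 ^ K := (Nat.lt_two_pow_self (n := K)).le
      calc N = 2 ^ (s + 1) * K := by rw [hN, pow_succ]; ring
        _ ≤ 2 ^ (s + 1) * 2 ^ K := Nat.mul_le_mul_left _ hKle
        _ = 2 ^ (s + 1 + K) := by rw [← pow_add]
    have h2 : Nat.log 2 N ≤ s + 1 + K := by
      calc Nat.log 2 N ≤ Nat.log 2 (2 ^ (s + 1 + K)) := Nat.log_mono_right h1
        _ = s + 1 + K := Nat.log_pow (by norm_num : (1:ℕ) < 2) (s + 1 + K)
    omega
  have hKLm : 4 * K * L < m := by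
    have h4K : 4 * K < 2 ^ (4 * K) := Nat.lt_two_pow_self
    have hb : s + K + 2 < 2 ^ (5 * K + 3) := by
      have h2 : 5 * K + 2 < 2 ^ (5 * K + 2) := Nat.lt_two_pow_self
      have h3 : 2 ^ (5 * K + 3) = 2 * 2 ^ (5 * K + 2) := by rw [pow_succ]; ring
      omega
    calc 4 * K * L ≤ 4 * K * (s + K + 2) := Nat.mul_le_mul_left _ hL
      _ < 2 ^ (4 * K) * 2 ^ (5 * K + 3) :=
        mul_lt_mul'' h4K hb (Nat.zero_le _) (Nat.zero_le _)
      _ = 2 ^ (4 * K + (5 * K + 3)) := by rw [← pow_add]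
      _ = m := by rw [hm, show 4 * K + (5 * K + 3) = s by omega]
  have hexp : L * (4 * K * m) < m * m := by
    have hm0 : 0 < m := by positivity
    calc L * (4 * K * m) = (4 * K * L) * m := by ring
      _ < m * m := (Nat.mul_lt_mul_right hm0).2 hKLm
  calc (N * N) ^ (K * (2 * m)) = N ^ (4 * K * m) := by
        rw [show N * N = N ^ 2 from (sq N).symm, ← pow_mul,
          show 2 * (K * (2 * m)) = 4 * K * m by ring]
    _ ≤ (2 ^ L) ^ (4 * K * m) := Nat.pow_le_pow_left hNL.le _
    _ = 2 ^ (L * (4 * K * m)) := by rw [← pow_mul]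
    _ < 2 ^ (m * m) := Nat.pow_lt_pow_right (by norm_num) hexp

/-- For every `k` there exists a cocomparability graph that is not
a `B_k`-VPG-graph; in particular, no class `B_k`-VPG contains all cocomparability
graphs. -/
theorem exists_cocomparability_not_BkVPG (k : ℕ) :
    ∃ (n : ℕ) (P : PartialOrder (Fin n)), ¬ IsBkVPG k (cocompGraph P) := by
  classical
  by_contra hcon
  simp only [not_exists, not_not] at hcon
  set K := k + 2 with hK
  set s := 9 * K + 3 with hs
  set m := 2 ^ s with hm
  set N := (2 * m) * (k + 2) with hN
  have hBk : ∀ E : Fin m → Fin m → Bool, IsBkVPG k (cocompGraph (pOrd m E)) :=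
    fun E => hcon (2 * m) (pOrd m E)
  have hdisc : ∀ E : Fin m → Fin m → Bool,
      ∃ r : Fin (2 * m) → Fin (k + 2) → Fin N × Fin N,
        gGraph k (2 * m) N r = cocompGraph (pOrd m E) :=
    fun E => discretize k (2 * m) _ (hBk E)
  choose Φ hΦ using hdisc
  have hinj : Function.Injective Φ := by
    intro E1 E2 h
    apply pOrd_inj m
    show cocompGraph (pOrd m E1) = cocompGraph (pOrd m E2)
    rw [← hΦ E1, ← hΦ E2, h]
  have hcard := Fintype.card_le_of_injective Φ hinj
  have hLcard : Fintype.card (Fin m → Fin m → Bool) = 2 ^ (m * m) := by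
    rw [Fintype.card_fun, Fintype.card_fun, Fintype.card_bool, Fintype.card_fin, ← pow_mul]
  have hRcard : Fintype.card (Fin (2 * m) → Fin (k + 2) → Fin N × Fin N) =
      (N * N) ^ (K * (2 * m)) := by
    rw [Fintype.card_fun, Fintype.card_fun, Fintype.card_prod, Fintype.card_fin,
      Fintype.card_fin, Fintype.card_fin, ← pow_mul,
      show (k + 2) * (2 * m) = K * (2 * m) by rw [hK]]
  rw [hLcard, hRcard] at hcard
  have hnum := numeric_bound K (by omega)
  rw [show 2 * 2 ^ (9 * K + 3) * K = N by rw [hN, hm, hs, hK],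
    show (9 * K + 3) = s from hs.symm, ← hm] at hnum
  omega
end

section
/- The cocomparability graph of every poset of dimension at most k+1 is a B_k-VPG-graph. -/
namespace CocompVPG

variable {n k : ℕ}

/-! ### Ranks in a linear order -/

noncomputable def rkf (r : Fin n → Fin n → Prop) (v : Fin n) : ℕ :=
  {w | r w v ∧ w ≠ v}.ncard

lemma rkf_le (r : Fin n → Fin n → Prop) (v : Fin n) : rkf r v ≤ n := by
  unfold rkf
  calc {w | r w v ∧ w ≠ v}.ncard ≤ (Set.univ : Set (Fin n)).ncard :=
        Set.ncard_le_ncard (Set.subset_univ _) Set.finite_univ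
    _ = n := by rw [Set.ncard_univ]; simp

lemma rkf_lt {r : Fin n → Fin n → Prop} (hlin : IsLinearOrder (Fin n) r) {u v : Fin n}
    (h : r u v) (hne : u ≠ v) : rkf r u < rkf r v := by
  haveI := hlin
  unfold rkf
  apply Set.ncard_lt_ncard _ (Set.toFinite _)
  have hsub : {w | r w u ∧ w ≠ u} ⊆ {w | r w v ∧ w ≠ v} := by
    intro w hw
    simp only [Set.mem_setOf_eq] at hw ⊢
    refine ⟨IsTrans.trans _ _ _ hw.1 h, ?_⟩
    rintro rfl
    exact hne (Std.Antisymm.antisymm _ _ h hw.1)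
  rw [Set.ssubset_iff_of_subset hsub]
  exact ⟨u, ⟨h, hne⟩, by simp⟩

/-! ### The staircase construction -/

noncomputable def Mb (n : ℕ) : ℝ := 4 * n + 4

lemma Mb_pos : (0:ℝ) < Mb n := by unfold Mb; positivity

noncomputable def cc (k : ℕ) (ρ : ℕ → Fin n → ℕ) (v : Fin n) (m : ℤ) : ℝ :=
  -(m:ℝ) * Mb n +
    if 0 ≤ m ∧ m ≤ (k:ℤ) then
      (if Even m then ((ρ m.toNat v : ℕ) : ℝ) else -((ρ m.toNat v : ℕ) : ℝ))
    else 0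

lemma cc_bound (hb : ∀ m v, ρ m v ≤ n) (v : Fin n) (m : ℤ) :
    -(m:ℝ) * Mb n - n ≤ cc k ρ v m ∧ cc k ρ v m ≤ -(m:ℝ) * Mb n + n := by
  have h1 : (0:ℝ) ≤ ((ρ m.toNat v : ℕ) : ℝ) := Nat.cast_nonneg _
  have h2 : ((ρ m.toNat v : ℕ) : ℝ) ≤ n := by exact_mod_cast hb m.toNat v
  have h3 : (0:ℝ) ≤ (n:ℝ) := Nat.cast_nonneg _
  unfold cc
  split_ifs <;> constructor <;> linarith

lemma cc_lt (hb : ∀ m v, ρ m v ≤ n) (v v' : Fin n) (m m' : ℤ) (h : m < m') :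
    cc k ρ v' m' < cc k ρ v m := by
  have b1 := (cc_bound (k := k) hb v' m').2
  have b2 := (cc_bound (k := k) hb v m).1
  have hmm : (m:ℝ) + 1 ≤ (m':ℝ) := by exact_mod_cast h
  have hMnn : (0:ℝ) ≤ Mb n := le_of_lt Mb_pos
  have key : ((m:ℝ) + 1) * Mb n ≤ (m':ℝ) * Mb n :=
    mul_le_mul_of_nonneg_right hmm hMnn
  have hMn : 2*(n:ℝ) + 4 ≤ Mb n := by
    unfold Mb; have : (0:ℝ) ≤ (n:ℝ) := Nat.cast_nonneg _; linarith
  linarith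

lemma cc_nat (ρ : ℕ → Fin n → ℕ) (v : Fin n) (m : ℕ) (hm : m ≤ k) :
    cc k ρ v (m:ℤ) = -(m:ℝ) * Mb n + (if Even m then ((ρ m v : ℕ):ℝ) else -((ρ m v : ℕ):ℝ)) := by
  unfold cc
  rw [if_pos ⟨Int.natCast_nonneg m, by exact_mod_cast hm⟩]
  simp [Int.toNat_natCast, Int.even_coe_nat]

lemma cc_le_iff_even {ρ : ℕ → Fin n → ℕ} {u v : Fin n} {m : ℕ} (hm : m ≤ k) (hme : Even m) :
    cc k ρ u (m:ℤ) ≤ cc k ρ v (m:ℤ) ↔ ρ m u ≤ ρ m v := by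
  rw [cc_nat ρ u m hm, cc_nat ρ v m hm, if_pos hme, if_pos hme]
  constructor
  · intro h; exact_mod_cast (by linarith : ((ρ m u : ℕ):ℝ) ≤ ((ρ m v : ℕ):ℝ))
  · intro h; have : ((ρ m u : ℕ):ℝ) ≤ ((ρ m v : ℕ):ℝ) := by exact_mod_cast h
    linarith

lemma cc_le_iff_odd {ρ : ℕ → Fin n → ℕ} {u v : Fin n} {m : ℕ} (hm : m ≤ k) (hmo : ¬ Even m) :
    cc k ρ u (m:ℤ) ≤ cc k ρ v (m:ℤ) ↔ ρ m v ≤ ρ m u := by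
  rw [cc_nat ρ u m hm, cc_nat ρ v m hm, if_neg hmo, if_neg hmo]
  constructor
  · intro h; exact_mod_cast (by linarith : ((ρ m v : ℕ):ℝ) ≤ ((ρ m u : ℕ):ℝ))
  · intro h; have : ((ρ m v : ℕ):ℝ) ≤ ((ρ m u : ℕ):ℝ) := by exact_mod_cast h
    linarith

noncomputable def ppt (k : ℕ) (ρ : ℕ → Fin n → ℕ) (v : Fin n) (m : ℕ) : ℝ × ℝ :=
  if Even m then (cc k ρ v ((m:ℤ) - 1), cc k ρ v (m:ℤ))
  else (cc k ρ v (m:ℤ), cc k ρ v ((m:ℤ) - 1))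

lemma ppt_rect (ρ : ℕ → Fin n → ℕ) (v : Fin n) : IsRectilinear k (ppt k ρ v) := by
  intro i _
  have hcast : ((i+1 : ℕ) : ℤ) - 1 = (i:ℤ) := by push_cast; ring
  rcases Nat.even_or_odd i with he | ho
  · right
    unfold ppt
    rw [if_pos he, if_neg (by simp [Nat.even_add_one, he])]
    simp [hcast]
  · left
    unfold ppt
    rw [if_neg (by simpa using ho), if_pos (by simp [Nat.even_add_one, Nat.not_even_iff_odd.mpr ho])]
    simp [hcast]

/-! ### Segments of the staircase -/

lemma seg_horiz {a b y : ℝ} (hba : b < a) (z : ℝ × ℝ) :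
    z ∈ segment ℝ (a, y) (b, y) ↔ z.2 = y ∧ b ≤ z.1 ∧ z.1 ≤ a := by
  constructor
  · rintro ⟨s, t, hs, ht, hst, hz⟩
    have h1 : s * a + t * b = z.1 := by
      have := congrArg Prod.fst hz
      simpa [Prod.smul_mk] using this
    have h2 : s * y + t * y = z.2 := by
      have := congrArg Prod.snd hz
      simpa [Prod.smul_mk] using this
    have e1 : s * b + t * b = b := by rw [← add_mul, hst, one_mul]
    have e2 : s * a + t * a = a := by rw [← add_mul, hst, one_mul]
    have e3 : s * y + t * y = y := by rw [← add_mul, hst, one_mul]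
    have m1 := mul_le_mul_of_nonneg_left (le_of_lt hba) hs
    have m2 := mul_le_mul_of_nonneg_left (le_of_lt hba) ht
    refine ⟨by linarith, by linarith, by linarith⟩
  · rintro ⟨h2, hbz, hza⟩
    have hab : a - b ≠ 0 := by linarith
    refine ⟨(z.1 - b)/(a-b), (a - z.1)/(a-b),
      div_nonneg (by linarith) (by linarith), div_nonneg (by linarith) (by linarith),
      by field_simp; ring, ?_⟩
    have : z = (z.1, z.2) := rfl
    rw [this]
    simp only [Prod.smul_mk, Prod.mk_add_mk, Prod.mk.injEq, smul_eq_mul]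
    constructor
    · field_simp; ring
    · rw [h2]; field_simp; ring

lemma seg_vert {a b x : ℝ} (hba : b < a) (z : ℝ × ℝ) :
    z ∈ segment ℝ (x, a) (x, b) ↔ z.1 = x ∧ b ≤ z.2 ∧ z.2 ≤ a := by
  constructor
  · rintro ⟨s, t, hs, ht, hst, hz⟩
    have h1 : s * a + t * b = z.2 := by
      have := congrArg Prod.snd hz
      simpa [Prod.smul_mk] using this
    have h2 : s * x + t * x = z.1 := by
      have := congrArg Prod.fst hz
      simpa [Prod.smul_mk] using this
    have e1 : s * b + t * b = b := by rw [← add_mul, hst, one_mul]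
    have e2 : s * a + t * a = a := by rw [← add_mul, hst, one_mul]
    have e3 : s * x + t * x = x := by rw [← add_mul, hst, one_mul]
    have m1 := mul_le_mul_of_nonneg_left (le_of_lt hba) hs
    have m2 := mul_le_mul_of_nonneg_left (le_of_lt hba) ht
    refine ⟨by linarith, by linarith, by linarith⟩
  · rintro ⟨h2, hbz, hza⟩
    have hab : a - b ≠ 0 := by linarith
    refine ⟨(z.2 - b)/(a-b), (a - z.2)/(a-b),
      div_nonneg (by linarith) (by linarith), div_nonneg (by linarith) (by linarith),
      by field_simp; ring, ?_⟩
    have : z = (z.1, z.2) := rfl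
    rw [this]
    simp only [Prod.smul_mk, Prod.mk_add_mk, Prod.mk.injEq, smul_eq_mul]
    constructor
    · rw [h2]; field_simp; ring
    · field_simp; ring

lemma mem_seg (hb : ∀ m v, ρ m v ≤ n) (v : Fin n) (i : ℕ) (z : ℝ × ℝ) :
    z ∈ segment ℝ (ppt k ρ v i) (ppt k ρ v (i+1)) ↔
      (if Even i then
        z.2 = cc k ρ v (i:ℤ) ∧ cc k ρ v ((i:ℤ)+1) ≤ z.1 ∧ z.1 ≤ cc k ρ v ((i:ℤ)-1)
      else
        z.1 = cc k ρ v (i:ℤ) ∧ cc k ρ v ((i:ℤ)+1) ≤ z.2 ∧ z.2 ≤ cc k ρ v ((i:ℤ)-1)) := by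
  have hcast : ((i+1 : ℕ) : ℤ) - 1 = (i:ℤ) := by push_cast; ring
  have hcast2 : ((i+1 : ℕ) : ℤ) = (i:ℤ) + 1 := by push_cast; ring
  have hlt : cc k ρ v ((i:ℤ)+1) < cc k ρ v ((i:ℤ)-1) := cc_lt hb v v ((i:ℤ)-1) ((i:ℤ)+1) (by omega)
  rcases Nat.even_or_odd i with he | ho
  · rw [if_pos he]
    have e1 : ppt k ρ v i = (cc k ρ v ((i:ℤ)-1), cc k ρ v (i:ℤ)) := by
      unfold ppt; rw [if_pos he]
    have e2 : ppt k ρ v (i+1) = (cc k ρ v ((i:ℤ)+1), cc k ρ v (i:ℤ)) := by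
      unfold ppt; rw [if_neg (by simp [Nat.even_add_one, he])]
      try rw [hcast, hcast2]
    rw [e1, e2, seg_horiz hlt]
  · rw [if_neg (by simpa using ho)]
    have e1 : ppt k ρ v i = (cc k ρ v (i:ℤ), cc k ρ v ((i:ℤ)-1)) := by
      unfold ppt; rw [if_neg (by simpa using ho)]
    have e2 : ppt k ρ v (i+1) = (cc k ρ v (i:ℤ), cc k ρ v ((i:ℤ)+1)) := by
      unfold ppt; rw [if_pos (by simp [Nat.even_add_one, Nat.not_even_iff_odd.mpr ho])]
      try rw [hcast, hcast2]
    rw [e1, e2, seg_vert hlt]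

lemma mem_bps {ρ : ℕ → Fin n → ℕ} {v : Fin n} {z : ℝ × ℝ} {i : ℕ} (hik : i ≤ k)
    (h : z ∈ segment ℝ (ppt k ρ v i) (ppt k ρ v (i+1))) :
    z ∈ BendPathSet k (ppt k ρ v) := by
  unfold BendPathSet
  rw [Set.mem_iUnion₂]
  exact ⟨i, by simpa [Finset.mem_range] using Nat.lt_succ_of_le hik, h⟩

/-! ### Crossing construction (completeness) -/

lemma cross (hb : ∀ m v, ρ m v ≤ n) {u v : Fin n} {m : ℕ} (hm : m < k)
    (h0 : ρ m u ≤ ρ m v) (h1 : ρ (m+1) v ≤ ρ (m+1) u) :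
    (BendPathSet k (ppt k ρ u) ∩ BendPathSet k (ppt k ρ v)).Nonempty := by
  have hmk : m ≤ k := le_of_lt hm
  have hm1k : m + 1 ≤ k := hm
  have hcast2 : ((m+1 : ℕ) : ℤ) = (m:ℤ) + 1 := by push_cast; ring
  rcases Nat.even_or_odd m with he | ho
  · have hodd1 : ¬ Even (m+1) := by simp [Nat.even_add_one, he]
    refine ⟨(cc k ρ v ((m:ℤ)+1), cc k ρ u (m:ℤ)), mem_bps hmk ?_, mem_bps hm1k ?_⟩
    · rw [mem_seg hb, if_pos he]
      refine ⟨rfl, ?_, le_of_lt (cc_lt (k := k) hb u v ((m:ℤ)-1) ((m:ℤ)+1) (by omega))⟩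
      rw [show ((m:ℤ)+1) = ((m+1:ℕ):ℤ) by omega]
      exact (cc_le_iff_odd hm1k hodd1).mpr h1
    · rw [mem_seg hb, if_neg hodd1, hcast2]
      refine ⟨rfl, le_of_lt (cc_lt (k := k) hb u v (m:ℤ) ((m:ℤ)+1+1) (by omega)), ?_⟩
      rw [show ((m:ℤ)+1-1) = ((m:ℕ):ℤ) by omega]
      exact (cc_le_iff_even hmk he).mpr h0
  · have hom : ¬ Even m := Nat.not_even_iff_odd.mpr ho
    have heven1 : Even (m+1) := by simp [Nat.even_add_one, hom]
    refine ⟨(cc k ρ v (m:ℤ), cc k ρ u ((m:ℤ)+1)), mem_bps hm1k ?_, mem_bps hmk ?_⟩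
    · rw [mem_seg hb, if_pos heven1, hcast2]
      refine ⟨rfl, le_of_lt (cc_lt (k := k) hb v u (m:ℤ) ((m:ℤ)+1+1) (by omega)), ?_⟩
      rw [show ((m:ℤ)+1-1) = ((m:ℕ):ℤ) by omega]
      exact (cc_le_iff_odd hmk hom).mpr h0
    · rw [mem_seg hb, if_neg hom]
      refine ⟨rfl, ?_, le_of_lt (cc_lt (k := k) hb v u ((m:ℤ)-1) ((m:ℤ)+1) (by omega))⟩
      rw [show ((m:ℤ)+1) = ((m+1:ℕ):ℤ) by omega]
      exact (cc_le_iff_even hm1k heven1).mpr h1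

/-! ### Soundness -/

lemma pin (hb : ∀ m v, ρ m v ≤ n) {v v' : Fin n} {m m' : ℤ}
    (h : cc k ρ v m ≤ cc k ρ v' m') : m' ≤ m := by
  by_contra h'
  push_neg at h'
  exact absurd h (not_le.mpr (cc_lt (k := k) hb v v' m m' h'))

lemma same_absurd (hb : ∀ m v, ρ m v ≤ n)
    (hinj : ∀ m ≤ k, ∀ u v : Fin n, u ≠ v → ρ m u ≠ ρ m v)
    {u v : Fin n} (hne : u ≠ v) {i j : ℕ} (hi : i ≤ k) (hj : j ≤ k)
    (hpar : (Even i ↔ Even j)) (h : cc k ρ u (i:ℤ) = cc k ρ v (j:ℤ)) : False := by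
  have hij : (i:ℤ) = (j:ℤ) := le_antisymm (pin hb h.ge) (pin hb h.le)
  have hij' : i = j := by exact_mod_cast hij
  subst hij'
  rcases Nat.even_or_odd i with he | ho
  · have h1 := (cc_le_iff_even (ρ := ρ) hi he).mp h.le
    have h2 := (cc_le_iff_even (ρ := ρ) hi he).mp h.ge
    exact hinj i hi u v hne (le_antisymm h1 h2)
  · have hom := Nat.not_even_iff_odd.mpr ho
    have h1 := (cc_le_iff_odd (ρ := ρ) hi hom).mp h.le
    have h2 := (cc_le_iff_odd (ρ := ρ) hi hom).mp h.ge
    exact hinj i hi u v hne (le_antisymm h2 h1)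

lemma sound_mixed (hb : ∀ m v, ρ m v ≤ n)
    (hinj : ∀ m ≤ k, ∀ u v : Fin n, u ≠ v → ρ m u ≠ ρ m v)
    {u v : Fin n} (hne : u ≠ v) {i j : ℕ} (hi : i ≤ k) (hj : j ≤ k)
    (hie : Even i) (hjo : ¬ Even j)
    (h1 : cc k ρ u ((i:ℤ)+1) ≤ cc k ρ v (j:ℤ)) (h2 : cc k ρ v (j:ℤ) ≤ cc k ρ u ((i:ℤ)-1))
    (h3 : cc k ρ v ((j:ℤ)+1) ≤ cc k ρ u (i:ℤ)) (h4 : cc k ρ u (i:ℤ) ≤ cc k ρ v ((j:ℤ)-1)) :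
    (∃ a ≤ k, ρ a v < ρ a u) ∧ (∃ b ≤ k, ρ b u < ρ b v) := by
  have hji : (j:ℤ) ≤ (i:ℤ) + 1 := pin hb h1
  have hij : (i:ℤ) - 1 ≤ (j:ℤ) := pin hb h2
  have hne' : i ≠ j := by rintro rfl; exact hjo hie
  have hcase : j = i + 1 ∨ i = j + 1 := by omega
  rcases hcase with rfl | rfl
  · -- j = i+1
    have hA : ρ (i+1) v ≤ ρ (i+1) u := by
      have := h1
      rw [show ((i:ℤ)+1) = ((i+1:ℕ):ℤ) by omega] at this
      exact (cc_le_iff_odd hj hjo).mp this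
    have hB : ρ i u ≤ ρ i v := by
      have := h4
      rw [show ((i+1:ℕ):ℤ)-1 = ((i:ℕ):ℤ) by push_cast; ring] at this
      exact (cc_le_iff_even hi hie).mp this
    refine ⟨⟨i+1, hj, lt_of_le_of_ne hA (hinj (i+1) hj v u hne.symm)⟩,
      ⟨i, hi, lt_of_le_of_ne hB (hinj i hi u v hne)⟩⟩
  · -- i = j+1
    have hA : ρ (j+1) v ≤ ρ (j+1) u := by
      have := h3
      rw [show ((j:ℤ)+1) = ((j+1:ℕ):ℤ) by omega] at this
      exact (cc_le_iff_even hi hie).mp this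
    have hB : ρ j u ≤ ρ j v := by
      have := h2
      rw [show ((j+1:ℕ):ℤ)-1 = ((j:ℕ):ℤ) by push_cast; ring] at this
      exact (cc_le_iff_odd hj hjo).mp this
    refine ⟨⟨j+1, hi, lt_of_le_of_ne hA (hinj (j+1) hi v u hne.symm)⟩,
      ⟨j, hj, lt_of_le_of_ne hB (hinj j hj u v hne)⟩⟩

lemma sound (hb : ∀ m v, ρ m v ≤ n)
    (hinj : ∀ m ≤ k, ∀ u v : Fin n, u ≠ v → ρ m u ≠ ρ m v)
    {u v : Fin n} (hne : u ≠ v) {i j : ℕ} (hi : i ≤ k) (hj : j ≤ k) {z : ℝ × ℝ}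
    (hzu : z ∈ segment ℝ (ppt k ρ u i) (ppt k ρ u (i+1)))
    (hzv : z ∈ segment ℝ (ppt k ρ v j) (ppt k ρ v (j+1))) :
    (∃ a ≤ k, ρ a v < ρ a u) ∧ (∃ b ≤ k, ρ b u < ρ b v) := by
  rw [mem_seg hb] at hzu hzv
  rcases Nat.even_or_odd i with hie | hio <;> rcases Nat.even_or_odd j with hje | hjo
  · rw [if_pos hie] at hzu; rw [if_pos hje] at hzv
    exact absurd (hzu.1.symm.trans hzv.1) (fun h => same_absurd hb hinj hne hi hj (by tauto) h)
  · rw [if_pos hie] at hzu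
    have hjo' := Nat.not_even_iff_odd.mpr hjo
    rw [if_neg hjo'] at hzv
    exact sound_mixed hb hinj hne hi hj hie hjo'
      (hzv.1 ▸ hzu.2.1) (hzv.1 ▸ hzu.2.2) (hzu.1 ▸ hzv.2.1) (hzu.1 ▸ hzv.2.2)
  · have hio' := Nat.not_even_iff_odd.mpr hio
    rw [if_neg hio'] at hzu; rw [if_pos hje] at hzv
    have := sound_mixed hb hinj hne.symm hj hi hje hio'
      (hzu.1 ▸ hzv.2.1) (hzu.1 ▸ hzv.2.2) (hzv.1 ▸ hzu.2.1) (hzv.1 ▸ hzu.2.2)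
    exact ⟨this.2.imp (fun a ha => ⟨ha.1, ha.2⟩), this.1.imp (fun a ha => ⟨ha.1, ha.2⟩)⟩
  · have hio' := Nat.not_even_iff_odd.mpr hio
    have hjo' := Nat.not_even_iff_odd.mpr hjo
    rw [if_neg hio'] at hzu; rw [if_neg hjo'] at hzv
    exact absurd (hzu.1.symm.trans hzv.1) (fun h => same_absurd hb hinj hne hi hj (by tauto) h)

/-! ### Sign flip lemma -/

lemma flip (P : ℕ → Prop) {k a b : ℕ} (ha : a ≤ k) (hb : b ≤ k)
    (hPa : ¬ P a) (hPb : P b) :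
    ∃ m < k, ((P m ∧ ¬ P (m+1)) ∨ (¬ P m ∧ P (m+1))) := by
  by_contra h
  push_neg at h
  have key : ∀ m ≤ k, (P m ↔ P 0) := by
    intro m hm
    induction m with
    | zero => tauto
    | succ i ih =>
      have hi := h i (by omega)
      have := ih (by omega)
      tauto
  have h1 := key a ha
  have h2 := key b hb
  tauto

end CocompVPG


/-- The cocomparability graph of every poset of dimension at most
`k + 1` is a `B_k`-VPG-graph. -/
theorem cocomparability_of_dim_le_isBkVPG (k n : ℕ) (P : PartialOrder (Fin n))
    (hdim : HasDimAtMost P (k + 1)) : IsBkVPG k (cocompGraph P) := by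
  classical
  obtain ⟨r, hlin, hle⟩ := hdim
  set ρ : ℕ → Fin n → ℕ := fun m v =>
    if h : m < k + 1 then CocompVPG.rkf (r ⟨m, h⟩) v else 0 with hρ
  have hb : ∀ m v, ρ m v ≤ n := by
    intro m v
    simp only [hρ]
    split_ifs
    · exact CocompVPG.rkf_le _ _
    · exact Nat.zero_le n
  have hrk : ∀ (m : ℕ) (hm : m < k + 1) (u v : Fin n), u ≠ v →
      (r ⟨m, hm⟩ u v ↔ ρ m u < ρ m v) := by
    intro m hm u v hne
    constructor
    · intro h
      simp only [hρ, dif_pos hm]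
      exact CocompVPG.rkf_lt (hlin _) h hne
    · intro h
      by_contra hr
      haveI := hlin ⟨m, hm⟩
      have hvu : r ⟨m, hm⟩ v u := (Std.Total.total u v).resolve_left hr
      have := CocompVPG.rkf_lt (hlin _) hvu hne.symm
      simp only [hρ, dif_pos hm] at h
      omega
  have hinj : ∀ m ≤ k, ∀ u v : Fin n, u ≠ v → ρ m u ≠ ρ m v := by
    intro m hm u v hne
    have hm' : m < k + 1 := by omega
    haveI := hlin ⟨m, hm'⟩
    rcases Std.Total.total (r := r ⟨m, hm'⟩) u v with h | h
    · exact Nat.ne_of_lt ((hrk m hm' u v hne).mp h)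
    · exact (Nat.ne_of_lt ((hrk m hm' v u hne.symm).mp h)).symm
  refine ⟨fun v => CocompVPG.ppt k ρ v, fun v => CocompVPG.ppt_rect ρ v, ?_⟩
  intro u v huv
  rw [cocompGraph, SimpleGraph.fromRel_adj]
  constructor
  · rintro ⟨-, hor⟩
    have h1 : ¬ P.le u v := by tauto
    have h2 : ¬ P.le v u := by tauto
    rw [hle] at h1 h2
    push_neg at h1 h2
    obtain ⟨a, ha⟩ := h1
    obtain ⟨b, hbx⟩ := h2
    haveI := hlin a
    haveI := hlin b
    have hA : ρ a.1 v < ρ a.1 u := by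
      have hvu : r a v u := (Std.Total.total u v).resolve_left ha
      have := (hrk a.1 a.2 v u huv.symm).mp (by rwa [Fin.eta])
      exact this
    have hB : ρ b.1 u < ρ b.1 v := by
      have huv' : r b u v := (Std.Total.total v u).resolve_left hbx
      have := (hrk b.1 b.2 u v huv).mp (by rwa [Fin.eta])
      exact this
    have haK : a.1 ≤ k := by omega
    have hbK : b.1 ≤ k := by omega
    obtain ⟨m, hmk, hcase⟩ := CocompVPG.flip (fun m => ρ m u < ρ m v) haK hbK
      (by omega) hB
    rcases hcase with ⟨hPm, hPm1⟩ | ⟨hPm, hPm1⟩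
    · exact CocompVPG.cross hb hmk (le_of_lt hPm) (by omega)
    · have := CocompVPG.cross (u := v) (v := u) hb hmk (by omega) (le_of_lt hPm1)
      rwa [Set.inter_comm] at this
  · rintro ⟨z, hzu, hzv⟩
    rw [BendPathSet, Set.mem_iUnion₂] at hzu hzv
    obtain ⟨i, hi, hsegu⟩ := hzu
    obtain ⟨j, hj, hsegv⟩ := hzv
    have hik : i ≤ k := by simpa [Finset.mem_range, Nat.lt_succ_iff] using hi
    have hjk : j ≤ k := by simpa [Finset.mem_range, Nat.lt_succ_iff] using hj
    obtain ⟨⟨a, hak, hA⟩, ⟨b, hbk, hB⟩⟩ :=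
      CocompVPG.sound hb hinj huv hik hjk hsegu hsegv
    refine ⟨huv, Or.inl ⟨?_, ?_⟩⟩
    · intro hle'
      rw [hle] at hle'
      have := (hrk a (by omega) u v huv).mp (hle' ⟨a, by omega⟩)
      omega
    · intro hle'
      rw [hle] at hle'
      have := (hrk b (by omega) v u huv.symm).mp (hle' ⟨b, by omega⟩)
      omega
end
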